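/- arXiv:2509.04189 — 3 statements merged into one kernel-verified Lean document; each statement's English description precedes it below -/
import Mathlib

section
/- Let n ≥ 1 and let Γ ⊆ ℝⁿ be a closed set. For p ∈ Γ and r > 0 define β_Γ(p,r) = (1/r) · inf over all (n−1)-dimensional linear subspaces π of ℝⁿ of sup_{q ∈ Γ ∩ B(p,r)} dist(q, p + π). If lim_{r→0} β_Γ(p,r) = 0 for every p ∈ Γ, then the Hausdorff dimension of Γ is at most n − 1. -/
open MeasureTheory Metric Filter Topology Set ENNReal Module

/-- The flatness coefficient `β_Γ(p,r)`: `(1/r)` times the infimum over all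
`(n-1)`-dimensional linear subspaces `π` of `ℝⁿ` of
`sup_{q ∈ Γ ∩ B(p,r)} dist(q, p + π)` (the supremum over the empty set is `0`). -/
noncomputable def betaNum {n : ℕ} (Γ : Set (EuclideanSpace ℝ (Fin n)))
    (p : EuclideanSpace ℝ (Fin n)) (r : ℝ) : ℝ :=
  r⁻¹ * sInf {s : ℝ | ∃ π : Submodule ℝ (EuclideanSpace ℝ (Fin n)),
    Module.finrank ℝ π = n - 1 ∧
    s = sSup ((fun q => Metric.infDist q ((fun v => p + v) '' (π : Set (EuclideanSpace ℝ (Fin n)))))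
        '' (Γ ∩ ball p r))}

lemma packing_lemma (m : ℕ) {R a : ℝ} (ha : 0 < a) (haR : a ≤ R)
    (S : Set (EuclideanSpace ℝ (Fin m))) (hS : S ⊆ closedBall 0 R) :
    ∃ T : Finset (EuclideanSpace ℝ (Fin m)), ↑T ⊆ S ∧ (T.card : ℝ) ≤ (6*R/a)^m ∧
      S ⊆ ⋃ t ∈ T, ball t a := by
  classical
  have hR : 0 < R := ha.trans_le haR
  let W := EuclideanSpace ℝ (Fin m)
  set 𝒜 : Set (Set W) := {T | T ⊆ S ∧ T.Pairwise fun x y => a ≤ dist x y} with h𝒜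
  obtain ⟨T₀, -, hmax⟩ := zorn_subset_nonempty 𝒜
    (fun c hc hchain _ => ⟨⋃₀ c, ⟨fun x hx => by
        obtain ⟨t, htc, hxt⟩ := hx; exact (hc htc).1 hxt,
      fun x hx y hy hxy => by
        obtain ⟨s, hsc, hxs⟩ := hx; obtain ⟨t, htc, hyt⟩ := hy
        rcases hchain.total hsc htc with h | h
        · exact (hc htc).2 (h hxs) hyt hxy
        · exact (hc hsc).2 hxs (h hyt) hxy⟩,
      fun s hs => subset_sUnion_of_mem hs⟩) ∅ ⟨empty_subset _, pairwise_empty _⟩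
  have hT₀S : T₀ ⊆ S := hmax.1.1
  have hsep : T₀.Pairwise fun x y => a ≤ dist x y := hmax.1.2
  -- cardinality bound for finite subsets
  have key : ∀ F : Finset W, ↑F ⊆ T₀ → (F.card : ℝ) ≤ (6*R/a)^m := by
    intro F hF
    have hdisj : (↑F : Set W).PairwiseDisjoint fun x => closedBall x (a/3) := by
      intro x hx y hy hxy
      exact closedBall_disjoint_closedBall (by linarith [hsep (hF hx) (hF hy) hxy])
    have hmeas := measure_biUnion_finset hdisj
      (fun i _ => (measurableSet_closedBall : MeasurableSet (closedBall i (a/3))))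
      (μ := (volume : Measure W))
    have hsub : (⋃ i ∈ F, closedBall i (a/3)) ⊆ closedBall (0 : W) (2*R) := by
      intro x hx
      simp only [mem_iUnion, exists_prop] at hx
      obtain ⟨t, htF, hxt⟩ := hx
      have h1 : dist t 0 ≤ R := by
        have := hS (hT₀S (hF htF)); rwa [mem_closedBall] at this
      have h2 : dist x t ≤ a/3 := by rwa [mem_closedBall] at hxt
      rw [mem_closedBall]
      calc dist x 0 ≤ dist x t + dist t 0 := dist_triangle _ _ _
        _ ≤ 2*R := by linarith
    have hfr : finrank ℝ W = m := finrank_euclideanSpace_fin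
    have hballs : ∀ x : W, volume (closedBall x (a/3)) =
        ENNReal.ofReal ((a/3)^m) * volume (ball (0:W) 1) := by
      intro x
      rw [Measure.addHaar_closedBall volume x (by positivity : (0:ℝ) ≤ a/3), hfr]
    have hbig : volume (closedBall (0:W) (2*R)) =
        ENNReal.ofReal ((2*R)^m) * volume (ball (0:W) 1) := by
      rw [Measure.addHaar_closedBall volume _ (by positivity : (0:ℝ) ≤ 2*R), hfr]
    have hle : (F.card : ℝ≥0∞) * (ENNReal.ofReal ((a/3)^m) * volume (ball (0:W) 1))
        ≤ ENNReal.ofReal ((2*R)^m) * volume (ball (0:W) 1) := by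
      calc (F.card : ℝ≥0∞) * (ENNReal.ofReal ((a/3)^m) * volume (ball (0:W) 1))
          = ∑ i ∈ F, volume (closedBall i (a/3)) := by
            rw [Finset.sum_congr rfl (fun i _ => hballs i), Finset.sum_const, nsmul_eq_mul]
        _ = volume (⋃ i ∈ F, closedBall i (a/3)) := hmeas.symm
        _ ≤ volume (closedBall (0:W) (2*R)) := measure_mono hsub
        _ = _ := hbig
    rw [← mul_assoc] at hle
    have hB0 : volume (ball (0:W) 1) ≠ 0 := (measure_ball_pos _ _ one_pos).ne'
    have hBtop : volume (ball (0:W) 1) ≠ ⊤ := measure_ball_lt_top.ne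
    have hle2 : (F.card : ℝ≥0∞) * ENNReal.ofReal ((a/3)^m) ≤ ENNReal.ofReal ((2*R)^m) :=
      (ENNReal.mul_le_mul_iff_left hB0 hBtop).1 hle
    have hle3 : (F.card : ℝ) * (a/3)^m ≤ (2*R)^m := by
      rw [← ENNReal.ofReal_natCast, ← ENNReal.ofReal_mul (by positivity)] at hle2
      exact (ENNReal.ofReal_le_ofReal_iff (by positivity)).1 hle2
    have h63 : (6*R/a)^m = (2*R)^m / (a/3)^m := by
      rw [← div_pow]; congr 1; field_simp; ring
    rw [h63, le_div_iff₀ (by positivity)]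
    exact hle3
  -- T₀ is finite
  have hfin : T₀.Finite := by
    by_contra hinf
    obtain ⟨F, hFsub, hFcard⟩ := (Set.Infinite.exists_subset_card_eq hinf
      (Nat.ceil ((6*R/a)^m) + 1))
    have := key F hFsub
    rw [hFcard] at this
    have h2 : ((6*R/a)^m : ℝ) ≤ Nat.ceil ((6*R/a)^m) := Nat.le_ceil _
    push_cast at this
    linarith
  refine ⟨hfin.toFinset, by simpa using hT₀S, by simpa using key hfin.toFinset (by simp), ?_⟩
  intro x hxS
  by_contra hx
  simp only [mem_iUnion, exists_prop, not_exists, not_and, Set.Finite.mem_toFinset] at hx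
  have hins : insert x T₀ ∈ 𝒜 := by
    constructor
    · exact insert_subset hxS hT₀S
    · intro y hy z hz hyz
      rcases hy with rfl | hy
      · rcases hz with rfl | hz
        · exact absurd rfl hyz
        · have := hx z hz; rw [mem_ball, not_lt] at this; rwa [dist_comm] at this ⊢
          -- dist y z = dist x z
      · rcases hz with rfl | hz
        · have := hx y hy; rw [mem_ball, not_lt] at this; rwa [dist_comm]
        · exact hsep hy hz hyz
  have hxT₀ : x ∈ T₀ := hmax.2 hins (subset_insert _ _) (mem_insert _ _)
  exact (hx x hxT₀) (mem_ball_self ha)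

lemma exists_hyperplane {n : ℕ} (hn : 1 ≤ n) :
    ∃ π : Submodule ℝ (EuclideanSpace ℝ (Fin n)), Module.finrank ℝ π = n - 1 := by
  set u : EuclideanSpace ℝ (Fin n) := EuclideanSpace.single ⟨0, hn⟩ (1:ℝ) with hu_def
  have hu : u ≠ 0 := by
    have h1 : ‖u‖ = 1 := by simp [hu_def]
    intro h; rw [h] at h1; simp at h1
  refine ⟨(ℝ ∙ u)ᗮ, ?_⟩
  have h1 : finrank ℝ (ℝ ∙ u) = 1 := finrank_span_singleton hu
  have h2 := Submodule.finrank_add_finrank_orthogonal (K := (ℝ ∙ u))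
  rw [h1, finrank_euclideanSpace_fin] at h2
  omega

lemma beta_extract {n : ℕ} (hn : 1 ≤ n) (Γ : Set (EuclideanSpace ℝ (Fin n)))
    {p : EuclideanSpace ℝ (Fin n)} {r ε : ℝ} (hr : 0 < r) (hε : 0 < ε)
    (hb : betaNum Γ p r ≤ ε) :
    ∃ π : Submodule ℝ (EuclideanSpace ℝ (Fin n)), Module.finrank ℝ π = n - 1 ∧
      ∀ q ∈ Γ ∩ ball p r,
        Metric.infDist q ((fun v => p + v) '' (π : Set (EuclideanSpace ℝ (Fin n)))) < 2*ε*r := by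
  set 𝒮 : Set ℝ := {s : ℝ | ∃ π : Submodule ℝ (EuclideanSpace ℝ (Fin n)),
    Module.finrank ℝ π = n - 1 ∧
    s = sSup ((fun q => Metric.infDist q ((fun v => p + v) '' (π : Set (EuclideanSpace ℝ (Fin n)))))
        '' (Γ ∩ ball p r))} with h𝒮
  have hne : 𝒮.Nonempty := by
    obtain ⟨π, hπ⟩ := exists_hyperplane hn
    exact ⟨_, π, hπ, rfl⟩
  have hinf : sInf 𝒮 ≤ ε * r := by
    have h1 : r⁻¹ * sInf 𝒮 ≤ ε := hb
    have h2 := mul_le_mul_of_nonneg_left h1 hr.le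
    rwa [← mul_assoc, mul_inv_cancel₀ hr.ne', one_mul, mul_comm r ε] at h2
  have hlt : sInf 𝒮 < 2*ε*r := lt_of_le_of_lt hinf (by nlinarith)
  obtain ⟨s, hs𝒮, hslt⟩ := exists_lt_of_csInf_lt hne hlt
  obtain ⟨π, hπ, rfl⟩ := hs𝒮
  refine ⟨π, hπ, fun x hx => ?_⟩
  have hbdd : BddAbove ((fun q => Metric.infDist q
      ((fun v => p + v) '' (π : Set (EuclideanSpace ℝ (Fin n))))) '' (Γ ∩ ball p r)) := by
    refine ⟨r, ?_⟩
    rintro y ⟨z, hz, rfl⟩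
    have h0 : p ∈ (fun v => p + v) '' (π : Set (EuclideanSpace ℝ (Fin n))) :=
      ⟨0, π.zero_mem, by simp⟩
    calc Metric.infDist z ((fun v => p + v) '' (π : Set (EuclideanSpace ℝ (Fin n))))
        ≤ dist z p := Metric.infDist_le_dist_of_mem h0
      _ ≤ r := (mem_ball.1 hz.2).le
  calc Metric.infDist x ((fun v => p + v) '' (π : Set (EuclideanSpace ℝ (Fin n))))
      ≤ sSup _ := le_csSup hbdd (mem_image_of_mem _ hx)
    _ < 2*ε*r := hslt

lemma cover_step {n : ℕ} (hn : 1 ≤ n) (Γ E : Set (EuclideanSpace ℝ (Fin n)))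
    (hE : E ⊆ Γ) {ε : ℝ} (hε : 0 < ε) (hε8 : ε ≤ 1/8)
    {q : EuclideanSpace ℝ (Fin n)} {ρ : ℝ} (hρ : 0 < ρ)
    (hb : betaNum Γ q ρ ≤ ε) :
    ∃ T : Finset (EuclideanSpace ℝ (Fin n)), ↑T ⊆ E ∩ ball q ρ ∧
      (T.card : ℝ) ≤ (12/ε)^(n-1) ∧ E ∩ ball q ρ ⊆ ⋃ t ∈ T, ball t (8*ε*ρ) := by
  classical
  obtain ⟨π, hπ, hplane⟩ := beta_extract hn Γ hρ hε hb
  have hex : ∀ x ∈ E ∩ ball q ρ, ∃ v, v ∈ π ∧ dist x (q + v) < 3*ε*ρ ∧ ‖v‖ ≤ 2*ρ := by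
    intro x hx
    have h1 : Metric.infDist x ((fun v => q + v) '' (π : Set (EuclideanSpace ℝ (Fin n))))
        < 3*ε*ρ := lt_of_lt_of_le (hplane x ⟨hE hx.1, hx.2⟩) (by nlinarith)
    have hPne : ((fun v => q + v) '' (π : Set (EuclideanSpace ℝ (Fin n)))).Nonempty :=
      ⟨q, 0, π.zero_mem, by simp⟩
    obtain ⟨y, hyP, hy⟩ := (Metric.infDist_lt_iff hPne).1 h1
    obtain ⟨v, hv, rfl⟩ := hyP
    refine ⟨v, hv, hy, ?_⟩
    have h2 : ‖v‖ = dist (q+v) q := by rw [dist_eq_norm]; simp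
    have hxq : dist x q < ρ := mem_ball.1 hx.2
    calc ‖v‖ = dist (q+v) q := h2
      _ ≤ dist (q+v) x + dist x q := dist_triangle _ _ _
      _ ≤ 2*ρ := by rw [dist_comm (q+v) x]; nlinarith
  set m := finrank ℝ π with hm
  set OB := (stdOrthonormalBasis ℝ π).repr with hOB
  set φ : EuclideanSpace ℝ (Fin n) → EuclideanSpace ℝ (Fin m) := fun x =>
    if h : ∃ v, v ∈ π ∧ dist x (q + v) < 3*ε*ρ ∧ ‖v‖ ≤ 2*ρ then
      OB ⟨h.choose, h.choose_spec.1⟩ else 0 with hφ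
  have hφ_eq : ∀ x (h : ∃ v, v ∈ π ∧ dist x (q + v) < 3*ε*ρ ∧ ‖v‖ ≤ 2*ρ),
      φ x = OB ⟨h.choose, h.choose_spec.1⟩ := fun x h => dif_pos h
  have hSW : φ '' (E ∩ ball q ρ) ⊆ closedBall 0 (2*ρ) := by
    rintro w ⟨x, hx, rfl⟩
    have h := hex x hx
    rw [hφ_eq x h, mem_closedBall_zero_iff]
    have : ‖OB ⟨h.choose, h.choose_spec.1⟩‖ = ‖h.choose‖ := by
      rw [OB.norm_map]; rfl
    rw [this]
    exact h.choose_spec.2.2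
  obtain ⟨TW, hTWsub, hTWcard, hTWcover⟩ := packing_lemma m
    (by positivity : (0:ℝ) < ε*ρ) (by nlinarith : ε*ρ ≤ 2*ρ) _ hSW
  set ψ : EuclideanSpace ℝ (Fin m) → EuclideanSpace ℝ (Fin n) := fun w =>
    if h : w ∈ φ '' (E ∩ ball q ρ) then h.choose else q with hψ
  refine ⟨TW.image ψ, ?_, ?_, ?_⟩
  · intro y hy
    simp only [Finset.coe_image, mem_image, Finset.mem_coe] at hy
    obtain ⟨w, hw, rfl⟩ := hy
    have hwS : w ∈ φ '' (E ∩ ball q ρ) := hTWsub hw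
    rw [hψ]; simp only [dif_pos hwS]
    exact hwS.choose_spec.1
  · calc ((TW.image ψ).card : ℝ) ≤ (TW.card : ℝ) := by exact_mod_cast Finset.card_image_le
      _ ≤ (6*(2*ρ)/(ε*ρ))^m := hTWcard
      _ = (12/ε)^(n-1) := by
          rw [hπ] at hm
          rw [hm]
          congr 1
          field_simp
          ring
  · intro x hx
    have hφx : φ x ∈ φ '' (E ∩ ball q ρ) := mem_image_of_mem _ hx
    obtain ⟨w, hwTW, hxw⟩ := by
      have := hTWcover hφx
      simpa only [mem_iUnion, exists_prop] using this
    have hwS : w ∈ φ '' (E ∩ ball q ρ) := hTWsub hwTW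
    set y := ψ w with hy_def
    have hψw : ψ w = hwS.choose := dif_pos hwS
    have hyE : y ∈ E ∩ ball q ρ := by rw [hy_def, hψw]; exact hwS.choose_spec.1
    have hφy : φ y = w := by rw [hy_def, hψw]; exact hwS.choose_spec.2
    -- distance estimate
    have hx' := hex x hx
    have hy' := hex y hyE
    have hdist_planes : dist (q + hx'.choose) (q + hy'.choose) = dist (φ x) (φ y) := by
      rw [hφ_eq x hx', hφ_eq y hy', OB.dist_map, dist_add_left, Subtype.dist_eq]
    have hd1 : dist x (q + hx'.choose) < 3*ε*ρ := hx'.choose_spec.2.1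
    have hd2 : dist y (q + hy'.choose) < 3*ε*ρ := hy'.choose_spec.2.1
    have hd3 : dist (φ x) (φ y) < ε*ρ := by rw [hφy]; exact mem_ball.1 hxw
    have : dist x y < 8*ε*ρ := by
      calc dist x y ≤ dist x (q + hx'.choose) + dist (q + hx'.choose) (q + hy'.choose)
            + dist (q + hy'.choose) y := dist_triangle4 _ _ _ _
        _ < 3*ε*ρ + ε*ρ + 3*ε*ρ := by
            rw [hdist_planes, dist_comm (q + hy'.choose) y]
            exact add_lt_add (add_lt_add hd1 hd3) hd2
        _ ≤ 8*ε*ρ := by nlinarith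
    simp only [mem_iUnion, exists_prop]
    exact ⟨y, Finset.mem_image_of_mem _ hwTW, mem_ball.2 (by rwa [dist_comm] at this ⊢)⟩

lemma exists_eps (k : ℕ) {d : ℝ} (hd : (k:ℝ) < d) :
    ∃ ε : ℝ, 0 < ε ∧ ε ≤ 1/9 ∧ ((Nat.ceil ((12/ε)^k) : ℝ)) * (8*ε)^d ≤ 1/2 := by
  set δ := d - k with hδdef
  have hδ : 0 < δ := by rw [hδdef]; linarith
  have h8d : (0:ℝ) < (8:ℝ)^d := Real.rpow_pos_of_pos (by norm_num) d
  set c : ℝ := (4 * 12^k * (8:ℝ)^d)⁻¹ with hc_def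
  have hc : 0 < c := by positivity
  set ε : ℝ := min (1/9) (c ^ (1/δ)) with hε_def
  have hcpow : 0 < c ^ (1/δ) := Real.rpow_pos_of_pos hc _
  have hεpos : 0 < ε := lt_min (by norm_num) hcpow
  have hε9 : ε ≤ 1/9 := min_le_left _ _
  refine ⟨ε, hεpos, hε9, ?_⟩
  have hεδ : ε ^ δ ≤ c := by
    calc ε ^ δ ≤ (c ^ (1/δ)) ^ δ :=
          Real.rpow_le_rpow hεpos.le (min_le_right _ _) hδ.le
      _ = c := by
          rw [← Real.rpow_mul hc.le, one_div_mul_cancel hδ.ne', Real.rpow_one]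
  have hεδpos : 0 < ε ^ δ := Real.rpow_pos_of_pos hεpos _
  have hεk : (0:ℝ) < ε ^ k := pow_pos hεpos k
  have hone : (1:ℝ) ≤ (12/ε)^k := one_le_pow₀ (by rw [le_div_iff₀ hεpos]; linarith)
  have hN : ((Nat.ceil ((12/ε)^k) : ℝ)) ≤ 2 * (12/ε)^k := by
    have h1 : ((Nat.ceil ((12/ε)^k) : ℝ)) < (12/ε)^k + 1 := Nat.ceil_lt_add_one (by positivity)
    linarith
  have h8ε : (8*ε)^d = (8:ℝ)^d * ε^d := Real.mul_rpow (by norm_num) hεpos.le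
  have hεd : ε^d = ε^k * ε^δ := by
    rw [show d = (k:ℝ) + δ by rw [hδdef]; ring, Real.rpow_add hεpos, Real.rpow_natCast]
  have h8εpos : (0:ℝ) ≤ (8*ε)^d := Real.rpow_nonneg (by positivity) _
  calc ((Nat.ceil ((12/ε)^k) : ℝ)) * (8*ε)^d ≤ 2 * (12/ε)^k * (8*ε)^d :=
        mul_le_mul_of_nonneg_right hN h8εpos
    _ = 2 * 12^k * (8:ℝ)^d * ε^δ := by
        rw [h8ε, hεd, div_pow]
        field_simp
    _ ≤ 2 * 12^k * (8:ℝ)^d * c := by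
        have h2 : (0:ℝ) ≤ 2 * 12^k * (8:ℝ)^d := by positivity
        exact mul_le_mul_of_nonneg_left hεδ h2
    _ = 1/2 := by
        rw [hc_def]
        field_simp
        ring

lemma main_zero {n : ℕ} (hn : 1 ≤ n) (Γ : Set (EuclideanSpace ℝ (Fin n)))
    (hbeta : ∀ p ∈ Γ, Tendsto (fun r => betaNum Γ p r) (𝓝[>] (0:ℝ)) (𝓝 0))
    {d : ℝ} (hd : ((n-1 : ℕ):ℝ) < d) : μH[d] Γ = 0 := by
  classical
  obtain ⟨ε, hε, hε9, hkey⟩ := exists_eps (n-1) hd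
  have hε8 : ε ≤ 1/8 := by linarith
  set N : ℕ := Nat.ceil ((12/ε)^(n-1)) with hNdef
  have hd0 : (0:ℝ) ≤ d := le_trans (Nat.cast_nonneg _) hd.le
  set E : ℕ → Set (EuclideanSpace ℝ (Fin n)) := fun m₀ =>
    {p | p ∈ Γ ∧ ∀ ρ : ℝ, 0 < ρ → ρ ≤ 1/(m₀+1) → betaNum Γ p ρ ≤ ε} with hEdef
  have hEΓ : ∀ m₀, E m₀ ⊆ Γ := fun m₀ x hx => hx.1
  have hunion : Γ ⊆ ⋃ m₀ : ℕ, E m₀ := by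
    intro p hp
    have h1 : {r : ℝ | betaNum Γ p r < ε} ∈ 𝓝[>] (0:ℝ) := hbeta p hp (Iio_mem_nhds hε)
    rw [mem_nhdsWithin] at h1
    obtain ⟨U, hU, h0U, hUsub⟩ := h1
    obtain ⟨δ', hδ', hδ'sub⟩ := Metric.mem_nhds_iff.1 (hU.mem_nhds h0U)
    obtain ⟨m₀, hm₀⟩ := exists_nat_one_div_lt hδ'
    refine mem_iUnion.2 ⟨m₀, hp, fun ρ hρ hρ' => ?_⟩
    have : ρ ∈ U ∩ Ioi 0 := ⟨hδ'sub (by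
      rw [mem_ball, Real.dist_eq, sub_zero, abs_of_pos hρ]
      exact lt_of_le_of_lt hρ' hm₀), hρ⟩
    exact (hUsub this).le
  have hzero : ∀ m₀ : ℕ, μH[d] (E m₀) = 0 := by
    intro m₀
    set r₀ : ℝ := 1/(m₀+1) with hr₀def
    have hr₀pos : 0 < r₀ := by positivity
    have covEx : ∀ y ∈ E m₀, ∀ ρ : ℝ, 0 < ρ → ρ ≤ r₀ →
        ∃ T : Finset (EuclideanSpace ℝ (Fin n)), ↑T ⊆ E m₀ ∩ ball y ρ ∧ T.card ≤ N ∧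
          E m₀ ∩ ball y ρ ⊆ ⋃ t ∈ T, ball t (8*ε*ρ) := by
      intro y hy ρ hρ hρr₀
      obtain ⟨T, hT1, hT2, hT3⟩ := cover_step hn Γ (E m₀) (hEΓ m₀) hε hε8 hρ (hy.2 ρ hρ hρr₀)
      refine ⟨T, hT1, ?_, hT3⟩
      have := hT2.trans (Nat.le_ceil ((12/ε)^(n-1)))
      exact_mod_cast this
    have hball : ∀ p ∈ E m₀, μH[d] (E m₀ ∩ ball p r₀) = 0 := by
      intro p hp
      set cov : EuclideanSpace ℝ (Fin n) → ℝ → Finset (EuclideanSpace ℝ (Fin n)) := fun y ρ =>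
        if h : y ∈ E m₀ ∧ 0 < ρ ∧ ρ ≤ r₀ then (covEx y h.1 ρ h.2.1 h.2.2).choose else ∅ with hcov
      set ρR : ℕ → ℝ := fun k => r₀ * (8*ε)^k with hρR
      have hρRpos : ∀ k, 0 < ρR k := fun k => by positivity
      have h8ε1 : 8*ε ≤ 1 := by linarith
      have h8εlt1 : 8*ε < 1 := by linarith
      have hρRle : ∀ k, ρR k ≤ r₀ := by
        intro k
        have h1 : (8*ε)^k ≤ 1 := pow_le_one₀ (by positivity) h8ε1
        calc ρR k = r₀ * (8*ε)^k := rfl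
          _ ≤ r₀ * 1 := mul_le_mul_of_nonneg_left h1 hr₀pos.le
          _ = r₀ := mul_one _
      set F : ℕ → Finset (EuclideanSpace ℝ (Fin n)) := fun k =>
        Nat.rec {p} (fun k' Fk => Fk.biUnion fun y => cov y (ρR k')) k with hFdef
      have hF0 : F 0 = {p} := rfl
      have hFs : ∀ k, F (k+1) = (F k).biUnion fun y => cov y (ρR k) := fun k => rfl
      have hInv : ∀ k, ↑(F k) ⊆ E m₀ ∧ (F k).card ≤ N^k ∧
          E m₀ ∩ ball p r₀ ⊆ ⋃ y ∈ F k, ball y (ρR k) := by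
        intro k
        induction k with
        | zero =>
          refine ⟨by simpa [hF0] using hp, by simp [hF0], ?_⟩
          intro x hx
          simp only [hF0, Finset.mem_singleton, mem_iUnion, exists_prop]
          refine ⟨p, by simp, ?_⟩
          have : dist x p < r₀ := mem_ball.1 hx.2
          simpa [hρR, mem_ball] using this
        | succ k ih =>
          obtain ⟨ihE, ihcard, ihcov⟩ := ih
          constructor
          · intro x hx
            rw [hFs k] at hx
            obtain ⟨y, hyF, hxcov⟩ := Finset.mem_biUnion.1 (by exact_mod_cast hx)
            have hyE : y ∈ E m₀ := ihE hyF
            have hc : cov y (ρR k) = (covEx y hyE (ρR k) (hρRpos k) (hρRle k)).choose :=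
              dif_pos ⟨hyE, hρRpos k, hρRle k⟩
            rw [hc] at hxcov
            exact ((covEx y hyE (ρR k) (hρRpos k) (hρRle k)).choose_spec.1 hxcov).1
          constructor
          · rw [hFs k]
            calc ((F k).biUnion fun y => cov y (ρR k)).card
                ≤ ∑ y ∈ F k, (cov y (ρR k)).card := Finset.card_biUnion_le
              _ ≤ (F k).card * N := by
                  refine Finset.sum_le_card_nsmul _ _ N (fun y hy => ?_)
                  have hyE : y ∈ E m₀ := ihE hy
                  have hc : cov y (ρR k) = (covEx y hyE (ρR k) (hρRpos k) (hρRle k)).choose :=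
                    dif_pos ⟨hyE, hρRpos k, hρRle k⟩
                  rw [hc]
                  exact (covEx y hyE (ρR k) (hρRpos k) (hρRle k)).choose_spec.2.1
              _ ≤ N^k * N := Nat.mul_le_mul_right N ihcard
              _ = N^(k+1) := (pow_succ N k).symm
          · intro x hx
            obtain ⟨y, hyF, hxy⟩ := by
              have := ihcov hx
              simpa only [mem_iUnion, exists_prop] using this
            have hyE : y ∈ E m₀ := ihE hyF
            have hc : cov y (ρR k) = (covEx y hyE (ρR k) (hρRpos k) (hρRle k)).choose :=
              dif_pos ⟨hyE, hρRpos k, hρRle k⟩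
            have hxmem : x ∈ E m₀ ∩ ball y (ρR k) := ⟨hx.1, hxy⟩
            have := (covEx y hyE (ρR k) (hρRpos k) (hρRle k)).choose_spec.2.2 hxmem
            obtain ⟨t, htT, hxt⟩ := by simpa only [mem_iUnion, exists_prop] using this
            simp only [mem_iUnion, exists_prop]
            refine ⟨t, ?_, ?_⟩
            · rw [hFs k]
              exact Finset.mem_biUnion.2 ⟨y, hyF, by rw [hc]; exact htT⟩
            · have heq : 8*ε*(ρR k) = ρR (k+1) := by
                simp only [hρR, pow_succ]; ring
              rwa [heq] at hxt
      -- Hausdorff measure estimate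
      have htdiam : ∀ k (i : (F k : Finset (EuclideanSpace ℝ (Fin n)))),
          EMetric.diam (ball (i : EuclideanSpace ℝ (Fin n)) (ρR k)) ≤ ENNReal.ofReal (2 * ρR k) := by
        intro k i
        refine EMetric.diam_le fun x hx y hy => ?_
        rw [edist_dist]
        refine ENNReal.ofReal_le_ofReal ?_
        have h1 : dist x (i : EuclideanSpace ℝ (Fin n)) < ρR k := mem_ball.1 hx
        have h2 : dist y (i : EuclideanSpace ℝ (Fin n)) < ρR k := mem_ball.1 hy
        calc dist x y ≤ dist x i + dist y i := dist_triangle_right _ _ _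
          _ ≤ 2 * ρR k := by linarith
      have hrtend : Tendsto (fun k => ENNReal.ofReal (2 * ρR k)) atTop (𝓝 0) := by
        have h1 : Tendsto (fun k : ℕ => 2 * ρR k) atTop (𝓝 0) := by
          have := (tendsto_pow_atTop_nhds_zero_of_lt_one (by positivity : (0:ℝ) ≤ 8*ε)
            h8εlt1).const_mul (2*r₀)
          simp only [mul_zero] at this
          convert this using 2 with k
          simp only [hρR]; ring
        have := ENNReal.tendsto_ofReal h1
        simpa using this
      have hmain := MeasureTheory.Measure.hausdorffMeasure_le_liminf_sum d (E m₀ ∩ ball p r₀)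
        (fun k => ENNReal.ofReal (2 * ρR k)) hrtend
        (fun k (i : (F k : Finset (EuclideanSpace ℝ (Fin n)))) =>
          ball (i : EuclideanSpace ℝ (Fin n)) (ρR k))
        (Eventually.of_forall htdiam)
        (Eventually.of_forall (fun k => by
          intro x hx
          obtain ⟨y, hyF, hxy⟩ := by
            have := (hInv k).2.2 hx
            simpa only [mem_iUnion, exists_prop] using this
          exact mem_iUnion.2 ⟨⟨y, hyF⟩, hxy⟩))
      have hsum : ∀ k, (∑ i : (F k : Finset (EuclideanSpace ℝ (Fin n))),
          EMetric.diam (ball (i : EuclideanSpace ℝ (Fin n)) (ρR k)) ^ d)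
          ≤ ENNReal.ofReal ((2*r₀)^d * ((N:ℝ) * (8*ε)^d)^k) := by
        intro k
        have hcard : ((F k).card : ℝ≥0∞) ≤ ((N^k : ℕ) : ℝ≥0∞) :=
          Nat.cast_le.2 (hInv k).2.1
        calc (∑ i : (F k : Finset (EuclideanSpace ℝ (Fin n))),
            EMetric.diam (ball (i : EuclideanSpace ℝ (Fin n)) (ρR k)) ^ d)
            ≤ ∑ _i : (F k : Finset (EuclideanSpace ℝ (Fin n))), (ENNReal.ofReal (2 * ρR k))^d :=
              Finset.sum_le_sum fun i _ => ENNReal.rpow_le_rpow (htdiam k i) hd0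
          _ = ((F k).card : ℝ≥0∞) * (ENNReal.ofReal (2 * ρR k))^d := by
              rw [Finset.sum_const, Finset.card_univ, Fintype.card_coe, nsmul_eq_mul]
          _ ≤ ((N^k : ℕ) : ℝ≥0∞) * (ENNReal.ofReal (2 * ρR k))^d :=
              mul_le_mul_left hcard _
          _ = ENNReal.ofReal ((N:ℝ)^k * (2 * ρR k)^d) := by
              rw [ENNReal.ofReal_rpow_of_nonneg (by positivity) hd0]
              rw [← ENNReal.ofReal_natCast (N^k), ← ENNReal.ofReal_mul (by positivity)]
              norm_num
          _ = ENNReal.ofReal ((2*r₀)^d * ((N:ℝ) * (8*ε)^d)^k) := by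
              congr 1
              have h1 : 2 * ρR k = (2*r₀) * (8*ε)^k := by simp only [hρR]; ring
              rw [h1, Real.mul_rpow (by positivity) (by positivity)]
              rw [← Real.rpow_natCast (8*ε) k, ← Real.rpow_mul (by positivity),
                mul_comm (k:ℝ) d, Real.rpow_mul (by positivity), Real.rpow_natCast]
              rw [mul_pow]
              ring
      have hA0 : (0:ℝ) ≤ (N:ℝ) * (8*ε)^d := by positivity
      have hA1 : (N:ℝ) * (8*ε)^d < 1 := lt_of_le_of_lt hkey (by norm_num)
      have htend0 : Tendsto (fun k : ℕ => ENNReal.ofReal ((2*r₀)^d * ((N:ℝ) * (8*ε)^d)^k))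
          atTop (𝓝 0) := by
        have h1 : Tendsto (fun k : ℕ => (2*r₀)^d * ((N:ℝ) * (8*ε)^d)^k) atTop (𝓝 0) := by
          have := (tendsto_pow_atTop_nhds_zero_of_lt_one hA0 hA1).const_mul ((2*r₀)^d)
          simpa using this
        simpa using ENNReal.tendsto_ofReal h1
      have hliminf : liminf (fun k => ∑ i : (F k : Finset (EuclideanSpace ℝ (Fin n))),
          EMetric.diam (ball (i : EuclideanSpace ℝ (Fin n)) (ρR k)) ^ d) atTop = 0 := by
        refine le_antisymm ?_ (zero_le)
        calc liminf _ atTop ≤ liminf (fun k => ENNReal.ofReal ((2*r₀)^d * ((N:ℝ) * (8*ε)^d)^k))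
              atTop := liminf_le_liminf (Eventually.of_forall hsum)
          _ = 0 := htend0.liminf_eq
      exact le_antisymm (hliminf ▸ hmain) (zero_le)
    -- separability
    obtain ⟨c, hc_count, hc_dense⟩ := TopologicalSpace.exists_countable_dense (↥(E m₀))
    have hcover : E m₀ ⊆ ⋃ q ∈ (Subtype.val '' c), E m₀ ∩ ball q r₀ := by
      intro x hx
      have hxcl : (⟨x, hx⟩ : ↥(E m₀)) ∈ closure c := hc_dense.closure_eq ▸ mem_univ _
      obtain ⟨y, hyc, hy⟩ := Metric.mem_closure_iff.1 hxcl r₀ hr₀pos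
      simp only [mem_iUnion, exists_prop]
      exact ⟨y, ⟨y, hyc, rfl⟩, hx, by rw [Subtype.dist_eq] at hy; exact mem_ball.2 hy⟩
    refine measure_mono_null hcover ?_
    refine measure_biUnion_null_iff (hc_count.image _) |>.2 ?_
    rintro q ⟨y, hyc, rfl⟩
    exact hball y.1 y.2
  refine measure_mono_null hunion ?_
  exact measure_iUnion_null fun m₀ => hzero m₀

/-- If `Γ ⊆ ℝⁿ` (with `n ≥ 1`) is closed and `β_Γ(p,r) → 0` as `r → 0` for every `p ∈ Γ`,
then the Hausdorff dimension of `Γ` is at most `n - 1`. -/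
theorem beta_decay_implies_dimH_le {n : ℕ} (hn : 1 ≤ n)
    (Γ : Set (EuclideanSpace ℝ (Fin n))) (hΓ : IsClosed Γ)
    (hbeta : ∀ p ∈ Γ, Tendsto (fun r => betaNum Γ p r) (𝓝[>] (0:ℝ)) (𝓝 0)) :
    dimH Γ ≤ (n - 1 : ℕ) := by
  refine dimH_le fun d' hd' => ?_
  by_contra hlt
  push_neg at hlt
  have hd : ((n-1 : ℕ):ℝ) < (d' : ℝ) := by exact_mod_cast hlt
  have hzero := main_zero hn Γ hbeta hd
  rw [hzero] at hd'
  exact (ENNReal.zero_ne_top hd').elim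
end

section
/- Let M be a d-cone of Radon measures on ℝⁿ, let s > 0, and let ν_i, ν be Radon measures on ℝⁿ such that ν_i → ν in the weak-* sense (i.e. ∫ f dν_i → ∫ f dν for every continuous compactly supported f : ℝⁿ → ℝ). If F_s(ν) > 0, then lim_{i→∞} d_s(ν_i, M) exists and equals d_s(ν, M). -/
open MeasureTheory Metric Filter Topology Set

/-- The pushforward of `μ` under `T_{a,r}(x) = (x - a)/r`. -/
noncomputable def blowup {n : ℕ} (μ : Measure (EuclideanSpace ℝ (Fin n)))
    (a : EuclideanSpace ℝ (Fin n)) (r : ℝ) : Measure (EuclideanSpace ℝ (Fin n)) :=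
  Measure.map (fun x => r⁻¹ • (x - a)) μ

/-- `F_K(μ,ν)`: the supremum of `|∫ f dμ - ∫ f dν|` over continuous `1`-Lipschitz
functions `f` with compact support contained in `K`. -/
noncomputable def FK {n : ℕ} (K : Set (EuclideanSpace ℝ (Fin n)))
    (μ ν : Measure (EuclideanSpace ℝ (Fin n))) : ℝ :=
  sSup {d : ℝ | ∃ f : EuclideanSpace ℝ (Fin n) → ℝ, Continuous f ∧ LipschitzWith 1 f ∧
    HasCompactSupport f ∧ tsupport f ⊆ K ∧ d = |(∫ x, f x ∂μ) - ∫ x, f x ∂ν|}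

/-- `F_r := F_K` for `K` the closed ball of radius `r` centered at the origin. -/
noncomputable def Fr {n : ℕ} (r : ℝ) (μ ν : Measure (EuclideanSpace ℝ (Fin n))) : ℝ :=
  FK (closedBall 0 r) μ ν

/-- `F_r(μ) := F_r(μ, 0)`. -/
noncomputable def Fb {n : ℕ} (r : ℝ) (μ : Measure (EuclideanSpace ℝ (Fin n))) : ℝ :=
  Fr r μ 0

/-- A collection `M` of nonzero Radon measures is a d-cone if it is invariant under
multiplication by positive constants and under the dilations `T_{0,r}`. -/
def IsDCone {n : ℕ} (M : Set (Measure (EuclideanSpace ℝ (Fin n)))) : Prop :=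
  (∀ μ ∈ M, μ ≠ 0 ∧ IsLocallyFiniteMeasure μ) ∧
  (∀ μ ∈ M, ∀ c : ℝ, 0 < c → ENNReal.ofReal c • μ ∈ M) ∧
  (∀ μ ∈ M, ∀ r : ℝ, 0 < r → blowup μ 0 r ∈ M)

/-- The distance `d_s(ν, M)` between `ν` and the d-cone `M` at scale `s`:
`inf { F_s(ν / F_s(ν), μ) : μ ∈ M, F_s(μ) = 1 }` when `0 < F_s(ν) < ∞`, and `1` otherwise. -/
noncomputable def dCone {n : ℕ} (s : ℝ) (ν : Measure (EuclideanSpace ℝ (Fin n)))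
    (M : Set (Measure (EuclideanSpace ℝ (Fin n)))) : ℝ :=
  if Fb s ν = 0 then 1 else
    sInf {d : ℝ | ∃ μ ∈ M, Fb s μ = 1 ∧ d = Fr s ((ENNReal.ofReal (Fb s ν))⁻¹ • ν) μ}

/-- Weak-* convergence of a sequence of measures on `ℝⁿ`: the integrals of every
continuous compactly supported function converge. -/
def WeakStarTendsto {n : ℕ} (μ : ℕ → Measure (EuclideanSpace ℝ (Fin n)))
    (ν : Measure (EuclideanSpace ℝ (Fin n))) : Prop :=
  ∀ f : EuclideanSpace ℝ (Fin n) → ℝ, Continuous f → HasCompactSupport f →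
    Tendsto (fun i => ∫ x, f x ∂(μ i)) atTop (𝓝 (∫ x, f x ∂ν))


namespace DConeAux

open scoped ENNReal

variable {n : ℕ}

local notation "E" => EuclideanSpace ℝ (Fin n)

/-- Pointwise bound for 1-Lipschitz functions supported in a ball. -/
lemma abs_le_of_lip (hn : 0 < n) {f : E → ℝ} (hl : LipschitzWith 1 f)
    {r : ℝ} (hr : 0 ≤ r) (hsupp : tsupport f ⊆ closedBall 0 r) (x : E) :
    |f x| ≤ 3 * r + 1 := by
  by_cases hx : x ∈ closedBall (0 : E) r
  · set e : E := EuclideanSpace.single (⟨0, hn⟩ : Fin n) (1 : ℝ) with he_def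
    have he : ‖e‖ = 1 := by simp [he_def, EuclideanSpace.norm_single]
    set y : E := x + (2 * r + 1) • e with hy_def
    have hxy : dist x y = 2 * r + 1 := by
      rw [hy_def, dist_self_add_right, norm_smul, he, Real.norm_eq_abs]
      rw [abs_of_nonneg (by linarith)]; ring
    have hy : y ∉ closedBall (0 : E) r := by
      simp only [mem_closedBall, dist_zero_right] at hx ⊢
      intro hyr
      have : ‖(2 * r + 1) • e‖ ≤ ‖y‖ + ‖x‖ := by
        have : (2 * r + 1) • e = y - x := by rw [hy_def]; abel
        rw [this]; exact norm_sub_le _ _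
      rw [norm_smul, he, Real.norm_eq_abs, abs_of_nonneg (by linarith)] at this
      linarith
    have hfy : f y = 0 := image_eq_zero_of_notMem_tsupport (fun h => hy (hsupp h))
    have := hl.dist_le_mul x y
    rw [NNReal.coe_one, one_mul, Real.dist_eq, hfy, sub_zero] at this
    linarith [this, hxy.le, hxy.ge]
  · have : f x = 0 := image_eq_zero_of_notMem_tsupport (fun h => hx (hsupp h))
    rw [this, abs_zero]; linarith

/-- Integral bound for functions vanishing outside a compact set. -/
lemma abs_integral_le {f : E → ℝ} (hc : Continuous f)
    {K : Set E} (hK : IsCompact K) (hsupp : ∀ x ∉ K, f x = 0)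
    {C : ℝ} (hC : ∀ x, |f x| ≤ C)
    (μ : Measure E) [IsLocallyFiniteMeasure μ] :
    |∫ x, f x ∂μ| ≤ C * (μ K).toReal := by
  rw [← setIntegral_eq_integral_of_forall_compl_eq_zero hsupp]
  rw [← Real.norm_eq_abs]
  exact norm_setIntegral_le_of_norm_le_const hK.measure_lt_top
    (fun x _ => by rw [Real.norm_eq_abs]; exact hC x)

/-- The truncated-cone cutoff `x ↦ max 0 (min 1 (a - ‖x‖))`. -/
noncomputable def cut (a : ℝ) (x : E) : ℝ := max 0 (min 1 (a - ‖x‖))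

lemma cut_cont (a : ℝ) : Continuous (cut (n := n) a) :=
  continuous_const.max (continuous_const.min (continuous_const.sub continuous_norm))

lemma cut_nonneg (a : ℝ) (x : E) : 0 ≤ cut a x := le_max_left _ _

lemma cut_le_one (a : ℝ) (x : E) : cut a x ≤ 1 := max_le zero_le_one (min_le_left _ _)

lemma cut_eq_one {a : ℝ} {x : E} (h : ‖x‖ ≤ a - 1) : cut a x = 1 := by
  rw [cut, min_eq_left (by linarith), max_eq_right zero_le_one]

lemma cut_eq_zero {a : ℝ} {x : E} (h : a ≤ ‖x‖) : cut a x = 0 := by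
  rw [cut, min_eq_right (by linarith), max_eq_left (by linarith)]

lemma cut_hcs {a : ℝ} : HasCompactSupport (cut (n := n) a) := by
  apply HasCompactSupport.intro (isCompact_closedBall (0 : E) a)
  intro x hx
  rw [mem_closedBall, dist_zero_right, not_le] at hx
  exact cut_eq_zero hx.le

lemma measure_le_integral_cut (μ : Measure E) [IsLocallyFiniteMeasure μ] (a : ℝ) :
    (μ (closedBall 0 a)).toReal ≤ ∫ x, cut (a + 1) x ∂μ := by
  have hint : Integrable (cut (a+1)) μ :=
    (cut_cont (a+1)).integrable_of_hasCompactSupport cut_hcs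
  have h1 : ∫ x in closedBall (0:E) a, cut (a+1) x ∂μ ≤ ∫ x, cut (a+1) x ∂μ :=
    setIntegral_le_integral hint (Eventually.of_forall fun x => cut_nonneg _ x)
  have h2 : ∫ x in closedBall (0:E) a, cut (a+1) x ∂μ
      = ∫ _ in closedBall (0:E) a, (1:ℝ) ∂μ := by
    apply setIntegral_congr_fun measurableSet_closedBall
    intro x hx
    rw [mem_closedBall, dist_zero_right] at hx
    exact cut_eq_one (by linarith)
  rw [h2, setIntegral_const, smul_eq_mul, mul_one] at h1
  exact h1


lemma isLocallyFinite_smul (a : ℝ≥0∞) (ha : a ≠ ⊤) (μ : Measure E)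
    [IsLocallyFiniteMeasure μ] : IsLocallyFiniteMeasure (a • μ) := by
  constructor; intro x
  obtain ⟨U, hU, hμU⟩ := μ.finiteAt_nhds x
  exact ⟨U, hU, by
    rw [Measure.smul_apply, smul_eq_mul]
    exact ENNReal.mul_lt_top ha.lt_top hμU⟩

/-- The set whose supremum is `Fr s μ ν`. -/
def Frset (s : ℝ) (μ ν : Measure E) : Set ℝ :=
  {d : ℝ | ∃ f : E → ℝ, Continuous f ∧ LipschitzWith 1 f ∧
    HasCompactSupport f ∧ tsupport f ⊆ closedBall 0 s ∧ d = |(∫ x, f x ∂μ) - ∫ x, f x ∂ν|}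

lemma Fr_eq (s : ℝ) (μ ν : Measure E) : Fr s μ ν = sSup (Frset s μ ν) := rfl

lemma zero_mem_Frset (s : ℝ) (μ ν : Measure E) : (0 : ℝ) ∈ Frset s μ ν := by
  refine ⟨fun _ => 0, continuous_const, fun x y => by simp, ?_, ?_, by simp⟩
  · have : tsupport (fun _ : E => (0:ℝ)) = ∅ := by
      simp [tsupport, Function.support]
    rw [HasCompactSupport, this]; exact isCompact_empty
  · have : tsupport (fun _ : E => (0:ℝ)) = ∅ := by
      simp [tsupport, Function.support]
    rw [this]; exact empty_subset _

lemma bddAbove_Frset (hn : 0 < n) {s : ℝ} (hs : 0 ≤ s) (μ ν : Measure E)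
    [IsLocallyFiniteMeasure μ] [IsLocallyFiniteMeasure ν] :
    BddAbove (Frset s μ ν) := by
  refine ⟨(3*s+1) * ((μ (closedBall 0 s)).toReal + (ν (closedBall 0 s)).toReal), ?_⟩
  rintro d ⟨f, hc, hl, hcs, hsupp, rfl⟩
  have hb := abs_le_of_lip hn hl hs hsupp
  have hz : ∀ x ∉ closedBall (0:E) s, f x = 0 := fun x hx =>
    image_eq_zero_of_notMem_tsupport (fun h => hx (hsupp h))
  have h1 := abs_integral_le hc (isCompact_closedBall 0 s) hz hb μ
  have h2 := abs_integral_le hc (isCompact_closedBall 0 s) hz hb ν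
  calc |(∫ x, f x ∂μ) - ∫ x, f x ∂ν| ≤ |∫ x, f x ∂μ| + |∫ x, f x ∂ν| := abs_sub _ _
  _ ≤ (3*s+1) * ((μ (closedBall 0 s)).toReal + (ν (closedBall 0 s)).toReal) := by
      rw [mul_add]; exact add_le_add h1 h2

lemma Fr_nonneg (hn : 0 < n) {s : ℝ} (hs : 0 ≤ s) (μ ν : Measure E)
    [IsLocallyFiniteMeasure μ] [IsLocallyFiniteMeasure ν] : 0 ≤ Fr s μ ν :=
  le_csSup (bddAbove_Frset hn hs μ ν) (zero_mem_Frset s μ ν)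

lemma Fr_symm (s : ℝ) (μ ν : Measure E) : Fr s μ ν = Fr s ν μ := by
  rw [Fr_eq, Fr_eq]
  congr 1; ext d
  constructor <;> rintro ⟨f, h1, h2, h3, h4, rfl⟩ <;>
    exact ⟨f, h1, h2, h3, h4, (abs_sub_comm _ _)⟩

lemma Fr_triangle (hn : 0 < n) {s : ℝ} (hs : 0 ≤ s) (μ ν ρ : Measure E)
    [IsLocallyFiniteMeasure μ] [IsLocallyFiniteMeasure ν] [IsLocallyFiniteMeasure ρ] :
    Fr s μ ρ ≤ Fr s μ ν + Fr s ν ρ := by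
  rw [Fr_eq]
  apply Real.sSup_le
  · rintro d ⟨f, h1, h2, h3, h4, rfl⟩
    have e1 : |(∫ x, f x ∂μ) - ∫ x, f x ∂ν| ≤ Fr s μ ν :=
      le_csSup (bddAbove_Frset hn hs μ ν) ⟨f, h1, h2, h3, h4, rfl⟩
    have e2 : |(∫ x, f x ∂ν) - ∫ x, f x ∂ρ| ≤ Fr s ν ρ :=
      le_csSup (bddAbove_Frset hn hs ν ρ) ⟨f, h1, h2, h3, h4, rfl⟩
    calc |(∫ x, f x ∂μ) - ∫ x, f x ∂ρ|
        ≤ |(∫ x, f x ∂μ) - ∫ x, f x ∂ν| + |(∫ x, f x ∂ν) - ∫ x, f x ∂ρ| :=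
          abs_sub_le _ _ _
      _ ≤ Fr s μ ν + Fr s ν ρ := add_le_add e1 e2
  · exact add_nonneg (Fr_nonneg hn hs μ ν) (Fr_nonneg hn hs ν ρ)

lemma abs_Fr_sub_le (hn : 0 < n) {s : ℝ} (hs : 0 ≤ s) (μ ν ρ : Measure E)
    [IsLocallyFiniteMeasure μ] [IsLocallyFiniteMeasure ν] [IsLocallyFiniteMeasure ρ] :
    |Fr s μ ρ - Fr s ν ρ| ≤ Fr s μ ν := by
  rw [abs_sub_le_iff]
  constructor
  · have := Fr_triangle hn hs μ ν ρ; linarith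
  · have := Fr_triangle hn hs ν μ ρ
    have h2 : Fr s ν μ = Fr s μ ν := Fr_symm s ν μ
    linarith

lemma Fr_smul_le (hn : 0 < n) {s : ℝ} (hs : 0 ≤ s) {a : ℝ} (ha : 0 ≤ a)
    (μ ν : Measure E) [IsLocallyFiniteMeasure μ] [IsLocallyFiniteMeasure ν] :
    Fr s (ENNReal.ofReal a • μ) (ENNReal.ofReal a • ν) ≤ a * Fr s μ ν := by
  rw [Fr_eq]
  apply Real.sSup_le
  · rintro d ⟨f, h1, h2, h3, h4, rfl⟩
    rw [integral_smul_measure, integral_smul_measure, ENNReal.toReal_ofReal ha,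
      smul_eq_mul, smul_eq_mul, ← mul_sub, abs_mul, abs_of_nonneg ha]
    exact mul_le_mul_of_nonneg_left
      (le_csSup (bddAbove_Frset hn hs μ ν) ⟨f, h1, h2, h3, h4, rfl⟩) ha
  · exact mul_nonneg ha (Fr_nonneg hn hs μ ν)

lemma Fr_smul_smul_le (hn : 0 < n) {s : ℝ} (hs : 0 ≤ s) {a b : ℝ} (ha : 0 ≤ a) (hb : 0 ≤ b)
    (ν : Measure E) [IsLocallyFiniteMeasure ν] :
    Fr s (ENNReal.ofReal a • ν) (ENNReal.ofReal b • ν) ≤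
      |a - b| * ((3*s+1) * (ν (closedBall 0 s)).toReal) := by
  rw [Fr_eq]
  apply Real.sSup_le
  · rintro d ⟨f, h1, h2, h3, h4, rfl⟩
    rw [integral_smul_measure, integral_smul_measure, ENNReal.toReal_ofReal ha,
      ENNReal.toReal_ofReal hb, smul_eq_mul, smul_eq_mul, ← sub_mul, abs_mul]
    have hz : ∀ x ∉ closedBall (0:E) s, f x = 0 := fun x hx =>
      image_eq_zero_of_notMem_tsupport (fun h => hx (h4 h))
    have hb := abs_le_of_lip hn h2 hs h4
    have h5 := abs_integral_le h1 (isCompact_closedBall 0 s) hz hb ν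
    exact mul_le_mul_of_nonneg_left h5 (abs_nonneg _)
  · positivity

set_option maxHeartbeats 2000000 in
lemma Fr_le_eventually (hn : 0 < n) {s : ℝ} (hs : 0 < s)
    (νi : ℕ → Measure E) (ν : Measure E)
    (hνi : ∀ i, IsLocallyFiniteMeasure (νi i)) (hν : IsLocallyFiniteMeasure ν)
    (hconv : ∀ f : E → ℝ, Continuous f → HasCompactSupport f →
      Tendsto (fun i => ∫ x, f x ∂(νi i)) atTop (𝓝 (∫ x, f x ∂ν)))
    {ε : ℝ} (hε : 0 < ε) :
    ∀ᶠ i in atTop, sSup (Frset s (νi i) ν) ≤ ε := by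
  haveI := hν
  set B1 : Set E := closedBall 0 (s+1) with hB1def
  -- the dominating constant A
  set A : ℝ := (∫ x, cut (s+2) x ∂ν) + 1 with hAdef
  have hνB1A : (ν B1).toReal ≤ A := by
    have := measure_le_integral_cut ν (s+1)
    have he : s + 1 + 1 = s + 2 := by ring
    rw [he] at this
    linarith
  have hA1 : 1 ≤ A := by
    have : 0 ≤ ∫ x, cut (s+2) x ∂ν := integral_nonneg fun x => cut_nonneg _ x
    linarith
  have hA0 : 0 < A := by linarith
  have hAi : ∀ᶠ i in atTop, ((νi i) B1).toReal ≤ A := by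
    have h1 := hconv (cut (s+2)) (cut_cont _) cut_hcs
    have h2 : ∀ᶠ i in atTop, (∫ x, cut (s+2) x ∂(νi i)) < A :=
      h1.eventually (eventually_lt_nhds (by linarith))
    filter_upwards [h2] with i hi
    haveI := hνi i
    have := measure_le_integral_cut (νi i) (s+1)
    have he : s + 1 + 1 = s + 2 := by ring
    rw [he] at this
    linarith
  -- the mesh size δ
  set δ : ℝ := min 1 (ε / (5 * A)) with hδdef
  have hδ0 : 0 < δ := lt_min one_pos (div_pos hε (by linarith))
  have hδ1 : δ ≤ 1 := min_le_left _ _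
  have hδ2 : δ ≤ ε / (5 * A) := min_le_right _ _
  -- the δ-net P of B1
  obtain ⟨t, htfin, htcov⟩ :=
    (Metric.totallyBounded_iff).1 (isCompact_closedBall (0:E) (s+1)).totallyBounded δ hδ0
  set P : Finset E := htfin.toFinset with hPdef
  have hPcov : ∀ x ∈ B1, ∃ p ∈ P, dist x p < δ := by
    intro x hx
    have := htcov hx
    rw [mem_iUnion₂] at this
    obtain ⟨p, hp, hxp⟩ := this
    exact ⟨p, by simpa [hPdef] using hp, mem_ball.1 hxp⟩
  have hPn : P.attach.Nonempty := by
    have h0B : (0:E) ∈ B1 := mem_closedBall_self (by linarith)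
    obtain ⟨p, hp, -⟩ := hPcov 0 h0B
    exact ⟨⟨p, hp⟩, Finset.mem_attach _ _⟩
  -- value grid
  set C : ℝ := 3*s+1 with hCdef
  set N : ℤ := ⌈C / δ⌉ + 1 with hNdef
  -- index type for the net of functions
  let ι : Type := {p // p ∈ P} → {k : ℤ // k ∈ Finset.Icc (-N) N}
  haveI : Finite ι := by infer_instance
  -- the net functions
  set φ : E → ℝ := cut (s+1) with hφdef
  let g : ι → E → ℝ := fun w x =>
    φ x * P.attach.inf' hPn (fun p => δ * ((w p : ℤ) : ℝ) + dist x p.1)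
  have hgc : ∀ w, Continuous (g w) := by
    intro w
    exact ((cut_cont (s+1))).mul
      (Continuous.finset_inf'_apply hPn fun p _ =>
        continuous_const.add (continuous_id.dist continuous_const))
  have hgz : ∀ w, ∀ x ∉ B1, g w x = 0 := by
    intro w x hx
    rw [mem_closedBall, dist_zero_right, not_le] at hx
    show φ x * _ = 0
    rw [hφdef, cut_eq_zero hx.le, zero_mul]
  have hgcs : ∀ w, HasCompactSupport (g w) :=
    fun w => HasCompactSupport.intro (isCompact_closedBall (0:E) (s+1)) (hgz w)
  -- eventual control of the integrals of net functions
  have hgev : ∀ᶠ i in atTop, ∀ w : ι, |(∫ x, g w x ∂(νi i)) - ∫ x, g w x ∂ν| ≤ δ := by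
    rw [eventually_all]
    intro w
    have h2 : ∀ᶠ y in 𝓝 (∫ x, g w x ∂ν), |y - ∫ x, g w x ∂ν| ≤ δ := by
      filter_upwards [Metric.closedBall_mem_nhds (∫ x, g w x ∂ν) hδ0] with y hy
      rwa [Metric.mem_closedBall, Real.dist_eq] at hy
    exact (hconv (g w) (hgc w) (hgcs w)).eventually h2
  -- approximation of arbitrary test functions by net functions
  have happrox : ∀ f : E → ℝ, Continuous f → LipschitzWith 1 f →
      tsupport f ⊆ closedBall 0 s → ∃ w : ι, ∀ x, |f x - g w x| ≤ 2*δ := by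
    intro f hfc hfl hfs
    have hfb : ∀ x : E, |f x| ≤ C := fun x => abs_le_of_lip hn hfl hs.le hfs x
    have hmem : ∀ p : E, ⌊f p / δ⌋ ∈ Finset.Icc (-N) N := by
      intro p
      have hfp := abs_le.1 (hfb p)
      rw [Finset.mem_Icc]
      constructor
      · calc -N ≤ -⌈C/δ⌉ := by linarith [hNdef]
          _ = ⌊-(C/δ)⌋ := (Int.floor_neg).symm
          _ ≤ ⌊f p / δ⌋ := by
              apply Int.floor_le_floor
              have hnd : -(C/δ) = (-C)/δ := by ring
              rw [hnd]
              exact (div_le_div_iff_of_pos_right hδ0).2 hfp.1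
      · calc ⌊f p / δ⌋ ≤ ⌊C/δ⌋ := Int.floor_le_floor ((div_le_div_iff_of_pos_right hδ0).2 hfp.2)
          _ ≤ ⌈C/δ⌉ := Int.floor_le_ceil _
          _ ≤ N := by linarith [hNdef]
    have hval : ∀ p : E, |δ * ((⌊f p / δ⌋ : ℤ) : ℝ) - f p| ≤ δ := by
      intro p
      have h1 : ((⌊f p / δ⌋ : ℤ) : ℝ) ≤ f p / δ := Int.floor_le _
      have h2 : f p / δ - 1 < ((⌊f p / δ⌋ : ℤ) : ℝ) := Int.sub_one_lt_floor _
      have e : δ * (f p / δ) = f p := by field_simp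
      have m1 : δ * ((⌊f p / δ⌋ : ℤ) : ℝ) ≤ δ * (f p / δ) :=
        mul_le_mul_of_nonneg_left h1 hδ0.le
      have m2 : δ * (f p / δ - 1) ≤ δ * ((⌊f p / δ⌋ : ℤ) : ℝ) :=
        mul_le_mul_of_nonneg_left h2.le hδ0.le
      have e2 : δ * (f p / δ - 1) = f p - δ := by rw [mul_sub, e, mul_one]
      rw [abs_le]
      constructor <;> linarith
    have hval2 : ∀ p : E, δ * ((⌊f p / δ⌋ : ℤ) : ℝ) ≤ f p := by
      intro p
      have h1 : ((⌊f p / δ⌋ : ℤ) : ℝ) ≤ f p / δ := Int.floor_le _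
      have e : δ * (f p / δ) = f p := by field_simp
      have m1 : δ * ((⌊f p / δ⌋ : ℤ) : ℝ) ≤ δ * (f p / δ) :=
        mul_le_mul_of_nonneg_left h1 hδ0.le
      linarith
    refine ⟨fun p => ⟨⌊f p.1 / δ⌋, hmem p.1⟩, ?_⟩
    have hglow : ∀ x, f x - δ ≤
        P.attach.inf' hPn (fun p => δ * ((⌊f p.1 / δ⌋ : ℤ) : ℝ) + dist x p.1) := by
      intro x
      apply Finset.le_inf'
      rintro ⟨p, hp⟩ -
      have hL := hfl.dist_le_mul x p
      rw [NNReal.coe_one, one_mul, Real.dist_eq] at hL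
      have hL2 := abs_le.1 hL
      have hv := abs_le.1 (hval p)
      have hd := dist_nonneg (x := x) (y := p)
      linarith
    have hgup : ∀ x ∈ B1,
        P.attach.inf' hPn (fun p => δ * ((⌊f p.1 / δ⌋ : ℤ) : ℝ) + dist x p.1)
          ≤ f x + 2*δ := by
      intro x hx
      obtain ⟨p, hpP, hpx⟩ := hPcov x hx
      have hle : P.attach.inf' hPn (fun p => δ * ((⌊f p.1 / δ⌋ : ℤ) : ℝ) + dist x p.1)
          ≤ δ * ((⌊f p / δ⌋ : ℤ) : ℝ) + dist x p :=
        Finset.inf'_le _ (Finset.mem_attach _ ⟨p, hpP⟩)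
      have hL := hfl.dist_le_mul x p
      rw [NNReal.coe_one, one_mul, Real.dist_eq] at hL
      have hL2 := abs_le.1 hL
      have hv := hval2 p
      linarith [hpx.le]
    intro x
    show |f x - φ x * P.attach.inf' hPn (fun p => δ * ((⌊f p.1 / δ⌋ : ℤ) : ℝ) + dist x p.1)|
        ≤ 2*δ
    set hh : ℝ := P.attach.inf' hPn (fun p => δ * ((⌊f p.1 / δ⌋ : ℤ) : ℝ) + dist x p.1)
      with hhdef
    by_cases hx1 : ‖x‖ ≤ s
    · have hφ1 : φ x = 1 := by rw [hφdef]; exact cut_eq_one (by linarith)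
      have hxB1 : x ∈ B1 := by rw [hB1def, mem_closedBall, dist_zero_right]; linarith
      have l1 := hglow x
      have l2 := hgup x hxB1
      rw [← hhdef] at l1 l2
      rw [hφ1, one_mul, abs_le]
      constructor <;> linarith
    · push_neg at hx1
      have hfx : f x = 0 := by
        refine image_eq_zero_of_notMem_tsupport fun hc => ?_
        have := hfs hc
        rw [mem_closedBall, dist_zero_right] at this
        linarith
      by_cases hx2 : ‖x‖ ≤ s + 1
      · have hxB1 : x ∈ B1 := by rw [hB1def, mem_closedBall, dist_zero_right]; exact hx2
        have l1 := hglow x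
        have l2 := hgup x hxB1
        rw [← hhdef] at l1 l2
        rw [hfx] at l1 l2
        have hφb0 : 0 ≤ φ x := by rw [hφdef]; exact cut_nonneg _ _
        have hφb1 : φ x ≤ 1 := by rw [hφdef]; exact cut_le_one _ _
        have habs2 : |hh| ≤ 2*δ := abs_le.2 ⟨by linarith, by linarith⟩
        rw [hfx, zero_sub, abs_neg, abs_mul, abs_of_nonneg hφb0]
        calc φ x * |hh| ≤ 1 * (2*δ) := mul_le_mul hφb1 habs2 (abs_nonneg _) zero_le_one
        _ = 2*δ := one_mul _
      · push_neg at hx2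
        have hφ0 : φ x = 0 := by rw [hφdef]; exact cut_eq_zero hx2.le
        rw [hfx, hφ0, zero_mul, sub_zero, abs_zero]
        linarith
  -- assembly
  filter_upwards [hAi, hgev] with i hi1 hi2
  haveI := hνi i
  apply Real.sSup_le _ hε.le
  rintro d ⟨f, h1, h2, h3, h4, rfl⟩
  obtain ⟨w, hw⟩ := happrox f h1 h2 h4
  have hfz : ∀ x ∉ B1, f x = 0 := by
    intro x hx
    refine image_eq_zero_of_notMem_tsupport fun hc => hx ?_
    exact closedBall_subset_closedBall (by linarith) (h4 hc)
  have hdiff : ∀ (μ : Measure E), IsLocallyFiniteMeasure μ →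
      |∫ x, (f x - g w x) ∂μ| ≤ (2*δ) * (μ B1).toReal := by
    intro μ hμ
    haveI := hμ
    exact abs_integral_le (h1.sub (hgc w)) (isCompact_closedBall (0:E) (s+1))
      (fun x hx => by rw [Pi.sub_apply, hfz x hx, hgz w x hx, sub_zero]) (fun x => hw x) μ
  have e1 := hdiff (νi i) (hνi i)
  have e2 := hdiff ν hν
  have e3 := hi2 w
  have hfi1 : Integrable f (νi i) := h1.integrable_of_hasCompactSupport h3
  have hfi2 : Integrable f ν := h1.integrable_of_hasCompactSupport h3
  have hgi1 : Integrable (g w) (νi i) := (hgc w).integrable_of_hasCompactSupport (hgcs w)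
  have hgi2 : Integrable (g w) ν := (hgc w).integrable_of_hasCompactSupport (hgcs w)
  have hsplit : (∫ x, f x ∂(νi i)) - ∫ x, f x ∂ν =
      (∫ x, (f x - g w x) ∂(νi i)) + ((∫ x, g w x ∂(νi i)) - ∫ x, g w x ∂ν)
        - (∫ x, (f x - g w x) ∂ν) := by
    rw [integral_sub hfi1 hgi1, integral_sub hfi2 hgi2]
    ring
  rw [hsplit]
  have habs : |(∫ x, (f x - g w x) ∂(νi i)) + ((∫ x, g w x ∂(νi i)) - ∫ x, g w x ∂ν)
        - (∫ x, (f x - g w x) ∂ν)|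
      ≤ |∫ x, (f x - g w x) ∂(νi i)| + |(∫ x, g w x ∂(νi i)) - ∫ x, g w x ∂ν|
        + |∫ x, (f x - g w x) ∂ν| := by
    calc _ ≤ |(∫ x, (f x - g w x) ∂(νi i)) + ((∫ x, g w x ∂(νi i)) - ∫ x, g w x ∂ν)|
        + |∫ x, (f x - g w x) ∂ν| := abs_sub _ _
    _ ≤ _ := by gcongr; exact abs_add_le _ _
  -- numeric conclusion
  have hm1 : (2*δ) * ((νi i) B1).toReal ≤ 2*δ*A := by
    have := ENNReal.toReal_nonneg (a := (νi i) B1)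
    nlinarith
  have hm2 : (2*δ) * (ν B1).toReal ≤ 2*δ*A := by
    have := ENNReal.toReal_nonneg (a := ν B1)
    nlinarith
  have hδA : δ * A ≤ ε / 5 := by
    rw [le_div_iff₀ (by linarith : (0:ℝ) < 5*A)] at hδ2
    nlinarith
  have hδε : δ ≤ ε / 5 := by
    calc δ = δ * 1 := (mul_one δ).symm
    _ ≤ δ * A := by nlinarith
    _ ≤ ε / 5 := hδA
  calc _ ≤ |∫ x, (f x - g w x) ∂(νi i)| + |(∫ x, g w x ∂(νi i)) - ∫ x, g w x ∂ν|
        + |∫ x, (f x - g w x) ∂ν| := habs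
  _ ≤ 2*δ*A + δ + 2*δ*A := by
      have q1 := le_trans e1 hm1
      have q2 := le_trans e2 hm2
      linarith
  _ ≤ ε := by nlinarith [hδA, hδε]


lemma Fr_tendsto_zero (hn : 0 < n) {s : ℝ} (hs : 0 < s)
    (νi : ℕ → Measure E) (ν : Measure E)
    (hνi : ∀ i, IsLocallyFiniteMeasure (νi i)) (hν : IsLocallyFiniteMeasure ν)
    (hconv : ∀ f : E → ℝ, Continuous f → HasCompactSupport f →
      Tendsto (fun i => ∫ x, f x ∂(νi i)) atTop (𝓝 (∫ x, f x ∂ν))) :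
    Tendsto (fun i => Fr s (νi i) ν) atTop (𝓝 0) := by
  haveI := hν
  refine tendsto_order.2 ⟨fun a ha => ?_, fun b hb => ?_⟩
  · refine Eventually.of_forall fun i => ?_
    haveI := hνi i
    exact lt_of_lt_of_le ha (Fr_nonneg hn hs.le _ _)
  · filter_upwards [Fr_le_eventually hn hs νi ν hνi hν hconv (half_pos hb)] with i hi
    calc Fr s (νi i) ν = sSup (Frset s (νi i) ν) := Fr_eq _ _ _
    _ ≤ b/2 := hi
    _ < b := half_lt_self hb

lemma Fb_nonpos_of_dim_zero {s : ℝ} (hs : 0 ≤ s) (ν : Measure (EuclideanSpace ℝ (Fin 0)))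
    [IsLocallyFiniteMeasure ν] : Fb s ν ≤ 0 := by
  haveI hsub : Subsingleton (EuclideanSpace ℝ (Fin 0)) :=
    ⟨fun a b => PiLp.ext fun i => i.elim0⟩
  haveI : Finite (EuclideanSpace ℝ (Fin 0)) := Finite.of_subsingleton
  haveI : CompactSpace (EuclideanSpace ℝ (Fin 0)) := Finite.compactSpace
  by_cases hm0 : (ν univ).toReal = 0
  · apply Real.sSup_le _ le_rfl
    rintro d ⟨f, h1, h2, h3, h4, rfl⟩
    have hconst : f = fun _ => f 0 := funext fun x => by rw [Subsingleton.elim x 0]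
    rw [hconst, integral_const, integral_zero_measure, sub_zero, Measure.real_def, hm0]
    simp
  · have hmpos : 0 < (ν univ).toReal :=
      lt_of_le_of_ne ENNReal.toReal_nonneg (Ne.symm hm0)
    have : Fb s ν = 0 := by
      apply Real.sSup_of_not_bddAbove
      rintro ⟨b, hb⟩
      set c : ℝ := (|b| + 1) / (ν univ).toReal with hc
      have hdmem : (|b| + 1 : ℝ) ∈ {d : ℝ | ∃ f : EuclideanSpace ℝ (Fin 0) → ℝ,
          Continuous f ∧ LipschitzWith 1 f ∧ HasCompactSupport f ∧
          tsupport f ⊆ closedBall 0 s ∧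
          d = |(∫ x, f x ∂ν) - ∫ x, f x ∂(0 : Measure (EuclideanSpace ℝ (Fin 0)))|} := by
        refine ⟨fun _ => c, continuous_const, ?_, ?_, ?_, ?_⟩
        · intro x y; simp
        · exact IsCompact.of_isClosed_subset isCompact_univ (isClosed_tsupport _)
            (subset_univ _)
        · intro x _
          rw [mem_closedBall, Subsingleton.elim x 0, dist_self]
          exact hs
        · rw [integral_const, integral_zero_measure, sub_zero, smul_eq_mul]
          have he : (ν univ).toReal * c = |b| + 1 := by
            rw [hc]; field_simp
          rw [Measure.real_def, he, abs_of_nonneg (show (0:ℝ) ≤ |b| + 1 by positivity)]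
      have h1 := hb hdmem
      have h2 := le_abs_self b
      linarith
    linarith

end DConeAux

open DConeAux

/-- If `ν_i → ν` weak-* and `F_s(ν) > 0`, then `d_s(ν_i, M) → d_s(ν, M)`. -/
theorem dCone_tendsto_of_weakStar {n : ℕ}
    (M : Set (Measure (EuclideanSpace ℝ (Fin n)))) (hM : IsDCone M) (s : ℝ) (hs : 0 < s)
    (νi : ℕ → Measure (EuclideanSpace ℝ (Fin n))) (ν : Measure (EuclideanSpace ℝ (Fin n)))
    (hνi : ∀ i, IsLocallyFiniteMeasure (νi i)) (hν : IsLocallyFiniteMeasure ν)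
    (hconv : WeakStarTendsto νi ν) (hFs : 0 < Fb s ν) :
    Tendsto (fun i => dCone s (νi i) M) atTop (𝓝 (dCone s ν M)) := by
  haveI := hν
  rcases Nat.eq_zero_or_pos n with hn0 | hn
  · subst hn0
    exact absurd hFs (not_lt.2 (Fb_nonpos_of_dim_zero hs.le ν))
  have hFr0 : Tendsto (fun i => Fr s (νi i) ν) atTop (𝓝 0) :=
    Fr_tendsto_zero hn hs νi ν hνi hν hconv
  have hb : ∀ i, |Fb s (νi i) - Fb s ν| ≤ Fr s (νi i) ν := by
    intro i
    haveI := hνi i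
    exact abs_Fr_sub_le hn hs.le (νi i) ν 0
  have hFb : Tendsto (fun i => Fb s (νi i)) atTop (𝓝 (Fb s ν)) := by
    have h1 : Tendsto (fun i => Fb s (νi i) - Fb s ν) atTop (𝓝 0) :=
      squeeze_zero_norm (fun i => by simpa using hb i) hFr0
    simpa using h1.add_const (Fb s ν)
  have hcpos : ∀ᶠ i in atTop, 0 < Fb s (νi i) := hFb.eventually (eventually_gt_nhds hFs)
  set Kν : ℝ := (3*s+1) * (ν (closedBall 0 s)).toReal with hKν
  have hdist : ∀ᶠ i in atTop, |dCone s (νi i) M - dCone s ν M| ≤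
      (Fb s (νi i))⁻¹ * Fr s (νi i) ν + |(Fb s (νi i))⁻¹ - (Fb s ν)⁻¹| * Kν := by
    filter_upwards [hcpos] with i hci
    haveI := hνi i
    have hRHS0 : 0 ≤ (Fb s (νi i))⁻¹ * Fr s (νi i) ν
        + |(Fb s (νi i))⁻¹ - (Fb s ν)⁻¹| * Kν := by
      apply add_nonneg
      · exact mul_nonneg (inv_nonneg.2 hci.le) (Fr_nonneg hn hs.le _ _)
      · apply mul_nonneg (abs_nonneg _)
        rw [hKν]
        exact mul_nonneg (by linarith) ENNReal.toReal_nonneg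
    rw [dCone, dCone, if_neg hci.ne', if_neg hFs.ne']
    set α : Measure (EuclideanSpace ℝ (Fin n)) := (ENNReal.ofReal (Fb s (νi i)))⁻¹ • νi i
      with hα
    set β : Measure (EuclideanSpace ℝ (Fin n)) := (ENNReal.ofReal (Fb s ν))⁻¹ • ν with hβ
    set γ : Measure (EuclideanSpace ℝ (Fin n)) := (ENNReal.ofReal (Fb s (νi i)))⁻¹ • ν
      with hγ
    haveI hαl : IsLocallyFiniteMeasure α := by
      rw [hα, ← ENNReal.ofReal_inv_of_pos hci]
      exact isLocallyFinite_smul _ ENNReal.ofReal_ne_top _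
    haveI hβl : IsLocallyFiniteMeasure β := by
      rw [hβ, ← ENNReal.ofReal_inv_of_pos hFs]
      exact isLocallyFinite_smul _ ENNReal.ofReal_ne_top _
    haveI hγl : IsLocallyFiniteMeasure γ := by
      rw [hγ, ← ENNReal.ofReal_inv_of_pos hci]
      exact isLocallyFinite_smul _ ENNReal.ofReal_ne_top _
    have hαβ : Fr s α β ≤ (Fb s (νi i))⁻¹ * Fr s (νi i) ν
        + |(Fb s (νi i))⁻¹ - (Fb s ν)⁻¹| * Kν := by
      have t1 : Fr s α γ ≤ (Fb s (νi i))⁻¹ * Fr s (νi i) ν := by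
        rw [hα, hγ, ← ENNReal.ofReal_inv_of_pos hci]
        exact Fr_smul_le hn hs.le (inv_nonneg.2 hci.le) _ _
      have t2 : Fr s γ β ≤ |(Fb s (νi i))⁻¹ - (Fb s ν)⁻¹| * Kν := by
        rw [hγ, hβ, ← ENNReal.ofReal_inv_of_pos hci, ← ENNReal.ofReal_inv_of_pos hFs, hKν]
        have := Fr_smul_smul_le hn hs.le (inv_nonneg.2 hci.le) (inv_nonneg.2 hFs.le) ν
        calc Fr s (ENNReal.ofReal (Fb s (νi i))⁻¹ • ν) (ENNReal.ofReal (Fb s ν)⁻¹ • ν)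
            ≤ |(Fb s (νi i))⁻¹ - (Fb s ν)⁻¹| * ((3*s+1) * (ν (closedBall 0 s)).toReal) :=
              this
        _ = |(Fb s (νi i))⁻¹ - (Fb s ν)⁻¹| * ((3*s+1) * (ν (closedBall 0 s)).toReal) := rfl
      have tri : Fr s α β ≤ Fr s α γ + Fr s γ β := Fr_triangle hn hs.le α γ β
      linarith
    by_cases hT : ∃ μ, μ ∈ M ∧ Fb s μ = 1
    · obtain ⟨μ₀, hμ₀M, hμ₀1⟩ := hT
      set Ai : Set ℝ := {d | ∃ μ ∈ M, Fb s μ = 1 ∧ d = Fr s α μ} with hAi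
      set Aν : Set ℝ := {d | ∃ μ ∈ M, Fb s μ = 1 ∧ d = Fr s β μ} with hAν
      have hAin : Ai.Nonempty := ⟨_, μ₀, hμ₀M, hμ₀1, rfl⟩
      have hAνn : Aν.Nonempty := ⟨_, μ₀, hμ₀M, hμ₀1, rfl⟩
      have hAib : BddBelow Ai := by
        refine ⟨0, ?_⟩
        rintro d ⟨μ, hμM, h1, rfl⟩
        haveI := (hM.1 μ hμM).2
        exact Fr_nonneg hn hs.le _ _
      have hAνb : BddBelow Aν := by
        refine ⟨0, ?_⟩
        rintro d ⟨μ, hμM, h1, rfl⟩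
        haveI := (hM.1 μ hμM).2
        exact Fr_nonneg hn hs.le _ _
      have key1 : sInf Ai ≤ sInf Aν + Fr s α β := by
        have hlb : ∀ d ∈ Aν, sInf Ai - Fr s α β ≤ d := by
          rintro d ⟨μ, hμM, hμ1, rfl⟩
          haveI := (hM.1 μ hμM).2
          have hin : Fr s α μ ∈ Ai := ⟨μ, hμM, hμ1, rfl⟩
          have h1 := csInf_le hAib hin
          have htri : Fr s α μ ≤ Fr s α β + Fr s β μ := Fr_triangle hn hs.le α β μ
          linarith
        have := le_csInf hAνn hlb
        linarith
      have key2 : sInf Aν ≤ sInf Ai + Fr s α β := by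
        have hlb : ∀ d ∈ Ai, sInf Aν - Fr s α β ≤ d := by
          rintro d ⟨μ, hμM, hμ1, rfl⟩
          haveI := (hM.1 μ hμM).2
          have hin : Fr s β μ ∈ Aν := ⟨μ, hμM, hμ1, rfl⟩
          have h1 := csInf_le hAνb hin
          have htri : Fr s β μ ≤ Fr s β α + Fr s α μ := Fr_triangle hn hs.le β α μ
          have hsymm : Fr s β α = Fr s α β := Fr_symm s β α
          linarith
        have := le_csInf hAin hlb
        linarith
      have : |sInf Ai - sInf Aν| ≤ Fr s α β := abs_sub_le_iff.2 ⟨by linarith, by linarith⟩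
      exact le_trans this hαβ
    · have e1 : {d : ℝ | ∃ μ ∈ M, Fb s μ = 1 ∧ d = Fr s α μ} = ∅ := by
        ext d
        simp only [Set.mem_setOf_eq, Set.mem_empty_iff_false, iff_false]
        rintro ⟨μ, hμM, h1, -⟩
        exact hT ⟨μ, hμM, h1⟩
      have e2 : {d : ℝ | ∃ μ ∈ M, Fb s μ = 1 ∧ d = Fr s β μ} = ∅ := by
        ext d
        simp only [Set.mem_setOf_eq, Set.mem_empty_iff_false, iff_false]
        rintro ⟨μ, hμM, h1, -⟩
        exact hT ⟨μ, hμM, h1⟩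
      rw [e1, e2, Real.sInf_empty, sub_self, abs_zero]
      exact hRHS0
  have hη : Tendsto (fun i => (Fb s (νi i))⁻¹ * Fr s (νi i) ν
      + |(Fb s (νi i))⁻¹ - (Fb s ν)⁻¹| * Kν) atTop (𝓝 0) := by
    have h1 : Tendsto (fun i => (Fb s (νi i))⁻¹) atTop (𝓝 (Fb s ν)⁻¹) :=
      hFb.inv₀ hFs.ne'
    have h2 := h1.mul hFr0
    have h3 : Tendsto (fun i => |(Fb s (νi i))⁻¹ - (Fb s ν)⁻¹| * Kν) atTop
        (𝓝 (|(Fb s ν)⁻¹ - (Fb s ν)⁻¹| * Kν)) := ((h1.sub_const _).abs).mul_const Kν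
    have h4 := h2.add h3
    simpa using h4
  have h5 : Tendsto (fun i => dCone s (νi i) M - dCone s ν M) atTop (𝓝 0) :=
    squeeze_zero_norm' (by filter_upwards [hdist] with i h; simpa using h) hη
  simpa using h5.add_const (dCone s ν M)
end

section
/- Let n ≥ 1, let ν ∈ ℝⁿ be a unit vector, let α, β > 0, and set P(x) = α(x·ν)⁺ − β(x·ν)⁻. Let x₀ ∈ ℝⁿ and let u : ℝⁿ → ℝ be continuous with lim_{x→x₀} |u(x) − P(x−x₀)| / |x−x₀| = 0. Then for every N > 0, as r ↓ 0, |({u > 0} Δ (x₀ + {P > 0})) ∩ B(x₀, rN)| / |B(x₀, rN)| → 0 and |({u < 0} Δ (x₀ + {P < 0})) ∩ B(x₀, rN)| / |B(x₀, rN)| → 0. -/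
open MeasureTheory Metric Filter Topology Set Pointwise

private lemma phase_aux {n : ℕ}
    (ν : EuclideanSpace ℝ (Fin n)) (hν : ‖ν‖ = 1) (α β : ℝ) (hα : 0 < α) (hβ : 0 < β)
    (x₀ : EuclideanSpace ℝ (Fin n)) (u : EuclideanSpace ℝ (Fin n) → ℝ) (hu : Continuous u)
    (P : EuclideanSpace ℝ (Fin n) → ℝ)
    (hP : P = fun x => α * max (inner ℝ x ν : ℝ) 0 - β * max (-(inner ℝ x ν : ℝ)) 0)
    (hlim : Tendsto (fun x => |u x - P (x - x₀)| / ‖x - x₀‖) (𝓝[≠] x₀) (𝓝 0))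
    (N : ℝ) (hN : 0 < N) :
    Tendsto (fun r =>
        volume (symmDiff {x | 0 < u x} ((fun y => x₀ + y) '' {x | 0 < P x}) ∩ ball x₀ (r * N))
          / volume (ball x₀ (r * N))) (𝓝[>] (0:ℝ)) (𝓝 0) := by
  have hν0 : ν ≠ 0 := by intro h; rw [h] at hν; simp at hν
  haveI : Nontrivial (EuclideanSpace ℝ (Fin n)) := nontrivial_of_ne ν 0 hν0
  haveI : NeBot (𝓝[≠] x₀) := Module.punctured_nhds_neBot ℝ _ _
  have hinner : Continuous fun x : EuclideanSpace ℝ (Fin n) => (inner ℝ x ν : ℝ) :=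
    continuous_id.inner continuous_const
  have hPcont : Continuous P := by
    rw [hP]
    exact (continuous_const.mul (hinner.max continuous_const)).sub
      (continuous_const.mul (hinner.neg.max continuous_const))
  have hP0 : P 0 = 0 := by simp [hP]
  -- u x₀ = 0
  have hu0 : u x₀ = 0 := by
    have h1 : Tendsto (fun x => u x - P (x - x₀)) (𝓝[≠] x₀) (𝓝 0) := by
      have habs : Tendsto (fun x => |u x - P (x - x₀)|) (𝓝[≠] x₀) (𝓝 0) := by
        have hnorm : Tendsto (fun x : EuclideanSpace ℝ (Fin n) => ‖x - x₀‖) (𝓝[≠] x₀) (𝓝 0) :=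
          (tendsto_norm_sub_self x₀).mono_left nhdsWithin_le_nhds
        have hmul := hlim.mul hnorm
        rw [mul_zero] at hmul
        apply hmul.congr'
        filter_upwards [self_mem_nhdsWithin] with x hx
        have hxne : x ≠ x₀ := hx
        rw [div_mul_cancel₀]
        exact norm_ne_zero_iff.2 (sub_ne_zero.2 hxne)
      exact (tendsto_zero_iff_abs_tendsto_zero _).2 habs
    have h2 : Tendsto (fun x => P (x - x₀)) (𝓝[≠] x₀) (𝓝 0) := by
      have : Tendsto (fun x => P (x - x₀)) (𝓝 x₀) (𝓝 (P (x₀ - x₀))) :=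
        (hPcont.comp (continuous_id.sub continuous_const)).tendsto x₀
      rw [sub_self, hP0] at this
      exact this.mono_left nhdsWithin_le_nhds
    have h3 : Tendsto u (𝓝[≠] x₀) (𝓝 0) := by
      have := h1.add h2
      rw [add_zero] at this
      simpa using this
    have h4 : Tendsto u (𝓝[≠] x₀) (𝓝 (u x₀)) := (hu.tendsto x₀).mono_left nhdsWithin_le_nhds
    exact tendsto_nhds_unique h4 h3
  have hm : 0 < min α β := lt_min hα hβ
  -- pointwise lower bound for |P|
  have hPabs : ∀ y : EuclideanSpace ℝ (Fin n), min α β * |(inner ℝ y ν : ℝ)| ≤ |P y| := by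
    intro y
    rcases le_total 0 (inner ℝ y ν : ℝ) with h | h
    · have hPy : P y = α * (inner ℝ y ν : ℝ) := by
        rw [hP]; dsimp only; rw [max_eq_left h, max_eq_right (neg_nonpos.mpr h)]; ring
      rw [hPy, abs_mul, abs_of_pos hα]
      exact mul_le_mul_of_nonneg_right (min_le_left α β) (abs_nonneg _)
    · have hPy : P y = β * (inner ℝ y ν : ℝ) := by
        rw [hP]; dsimp only; rw [max_eq_right h, max_eq_left (neg_nonneg.mpr h)]; ring
      rw [hPy, abs_mul, abs_of_pos hβ]
      exact mul_le_mul_of_nonneg_right (min_le_right α β) (abs_nonneg _)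
  -- the slabs
  set S : ℕ → Set (EuclideanSpace ℝ (Fin n)) :=
    fun k => ball 0 1 ∩ {x | |(inner ℝ x ν : ℝ)| ≤ 1 / (k + 1)} with hSdef
  have hSmeas : ∀ k, MeasurableSet (S k) := fun k =>
    measurableSet_ball.inter ((isClosed_le hinner.abs continuous_const).measurableSet)
  have hSanti : Antitone S := by
    intro k l hkl x hx
    obtain ⟨h1, h2⟩ := hx
    refine ⟨h1, ?_⟩
    show |(inner ℝ x ν : ℝ)| ≤ 1 / (k + 1)
    refine le_trans h2 ?_
    apply one_div_le_one_div_of_le (by positivity)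
    exact_mod_cast add_le_add_left (Nat.cast_le.2 hkl) 1
  have hIcap : volume (⋂ k, S k) = 0 := by
    have hker : LinearMap.ker (innerSL ℝ ν : EuclideanSpace ℝ (Fin n) →ₗ[ℝ] ℝ) ≠ ⊤ := by
      intro h
      have hmem : ν ∈ LinearMap.ker (innerSL ℝ ν : EuclideanSpace ℝ (Fin n) →ₗ[ℝ] ℝ) := h ▸ Submodule.mem_top
      rw [LinearMap.mem_ker] at hmem
      have : (inner ℝ ν ν : ℝ) = 0 := hmem
      rw [real_inner_self_eq_norm_sq, hν] at this
      norm_num at this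
    have hsubset : (⋂ k, S k) ⊆ (LinearMap.ker (innerSL ℝ ν : EuclideanSpace ℝ (Fin n) →ₗ[ℝ] ℝ) : Set (EuclideanSpace ℝ (Fin n))) := by
      intro x hx
      have h1 : ∀ k : ℕ, |(inner ℝ x ν : ℝ)| ≤ 1 / (k + 1) := fun k => (mem_iInter.1 hx k).2
      have h2 : |(inner ℝ x ν : ℝ)| ≤ 0 :=
        ge_of_tendsto' tendsto_one_div_add_atTop_nhds_zero_nat h1
      have h3 : (inner ℝ x ν : ℝ) = 0 := abs_nonpos_iff.1 h2
      have : (inner ℝ ν x : ℝ) = 0 := by rw [real_inner_comm]; exact h3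
      exact this
    exact measure_mono_null hsubset (Measure.addHaar_submodule volume _ hker)
  have htend : Tendsto (fun k => volume (S k)) atTop (𝓝 0) := by
    have := tendsto_measure_iInter_atTop (μ := volume)
      (fun k => (hSmeas k).nullMeasurableSet) hSanti
      ⟨0, ((measure_mono inter_subset_left).trans_lt measure_ball_lt_top).ne⟩
    rw [hIcap] at this
    exact this
  rw [ENNReal.tendsto_nhds_zero]
  intro ε hε
  have hvolB1 : 0 < volume (ball (0 : EuclideanSpace ℝ (Fin n)) 1) :=
    measure_ball_pos volume 0 one_pos
  obtain ⟨k, hk⟩ : ∃ k, volume (S k) ≤ ε * volume (ball (0 : EuclideanSpace ℝ (Fin n)) 1) := by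
    have hpos : (0 : ENNReal) < ε * volume (ball (0 : EuclideanSpace ℝ (Fin n)) 1) :=
      ENNReal.mul_pos hε.ne' hvolB1.ne'
    obtain ⟨k, hk⟩ := (htend.eventually_lt_const hpos).exists
    exact ⟨k, hk.le⟩
  set ε₀ : ℝ := min α β / (k + 1) with hε₀def
  have hε₀pos : 0 < ε₀ := by positivity
  have hev : {x | |u x - P (x - x₀)| / ‖x - x₀‖ < ε₀} ∈ 𝓝[≠] x₀ := hlim (gt_mem_nhds hε₀pos)
  rw [Metric.mem_nhdsWithin_iff] at hev
  obtain ⟨R, hR, hRsub⟩ := hev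
  filter_upwards [Ioo_mem_nhdsGT_of_mem ⟨le_refl (0:ℝ), div_pos hR hN⟩] with r hr
  obtain ⟨hr0, hrRN⟩ := hr
  set ρ := r * N with hρdef
  have hρ0 : 0 < ρ := mul_pos hr0 hN
  have hρR : ρ < R := (lt_div_iff₀ hN).1 hrRN
  have himg : ((fun y => x₀ + y) '' {x | 0 < P x}) = {x | 0 < P (x - x₀)} := by
    ext x
    constructor
    · rintro ⟨y, hy, rfl⟩
      simpa using hy
    · intro hx
      exact ⟨x - x₀, hx, add_sub_cancel x₀ x⟩
  rw [himg]
  apply ENNReal.div_le_of_le_mul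
  have hsub : symmDiff {x | 0 < u x} {x | 0 < P (x - x₀)} ∩ ball x₀ ρ ⊆ x₀ +ᵥ (ρ • S k) := by
    rintro x ⟨hsd, hball⟩
    have hxne : x ≠ x₀ := by
      rintro rfl
      rw [Set.mem_symmDiff] at hsd
      simp [Set.mem_setOf_eq, hu0, sub_self, hP0] at hsd
    have hxd : ‖x - x₀‖ < ρ := by rw [← dist_eq_norm]; exact mem_ball.1 hball
    have hdn : 0 < ‖x - x₀‖ := norm_pos_iff.2 (sub_ne_zero.2 hxne)
    have hd : |u x - P (x - x₀)| / ‖x - x₀‖ < ε₀ :=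
      hRsub ⟨mem_ball.2 ((mem_ball.1 hball).trans hρR), Set.mem_compl_singleton_iff.mpr hxne⟩
    have habs : |u x - P (x - x₀)| < ε₀ * ρ := by
      have h1 := (div_lt_iff₀ hdn).1 hd
      have h2 : ε₀ * ‖x - x₀‖ ≤ ε₀ * ρ := mul_le_mul_of_nonneg_left hxd.le hε₀pos.le
      linarith
    have hPsmall : |P (x - x₀)| < ε₀ * ρ := by
      rw [Set.mem_symmDiff] at hsd
      have hab := abs_lt.1 habs
      rcases hsd with ⟨hu1, hP1⟩ | ⟨hP1, hu1⟩
      · have hu1' : 0 < u x := hu1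
        have hP2 : P (x - x₀) ≤ 0 := not_lt.1 hP1
        rw [abs_of_nonpos hP2]
        linarith [hab.1]
      · have hP1' : 0 < P (x - x₀) := hP1
        have hu2 : u x ≤ 0 := not_lt.1 hu1
        rw [abs_of_pos hP1']
        linarith [hab.2]
    have ht : |(inner ℝ (x - x₀) ν : ℝ)| < ρ / (k + 1) := by
      have h1 := (hPabs (x - x₀)).trans_lt hPsmall
      have h2 : ε₀ * ρ = min α β * (ρ / (k + 1)) := by rw [hε₀def]; ring
      rw [h2] at h1
      exact (mul_lt_mul_iff_right₀ hm).1 h1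
    have hy : ρ⁻¹ • (x - x₀) ∈ S k := by
      constructor
      · rw [mem_ball_zero_iff, norm_smul, Real.norm_eq_abs, abs_of_pos (inv_pos.2 hρ0),
          inv_mul_eq_div]
        exact (div_lt_one hρ0).2 hxd
      · show |(inner ℝ (ρ⁻¹ • (x - x₀)) ν : ℝ)| ≤ 1 / (k + 1)
        rw [real_inner_smul_left, abs_mul, abs_of_pos (inv_pos.2 hρ0), inv_mul_eq_div,
          div_le_div_iff₀ hρ0 (by positivity : (0:ℝ) < (k:ℝ) + 1)]
        have h2 : |(inner ℝ (x - x₀) ν : ℝ)| * ((k:ℝ) + 1) < ρ :=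
          (lt_div_iff₀ (by positivity : (0:ℝ) < (k:ℝ) + 1)).1 ht
        linarith
    refine ⟨x - x₀, ⟨ρ⁻¹ • (x - x₀), hy, smul_inv_smul₀ hρ0.ne' _⟩, ?_⟩
    show x₀ + (x - x₀) = x
    exact add_sub_cancel x₀ x
  calc volume (symmDiff {x | 0 < u x} {x | 0 < P (x - x₀)} ∩ ball x₀ ρ)
      ≤ volume (x₀ +ᵥ (ρ • S k)) := measure_mono hsub
    _ = volume (ρ • S k) := by rw [measure_vadd]
    _ = ENNReal.ofReal (ρ ^ Module.finrank ℝ (EuclideanSpace ℝ (Fin n))) * volume (S k) :=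
        Measure.addHaar_smul_of_nonneg volume hρ0.le _
    _ ≤ ENNReal.ofReal (ρ ^ Module.finrank ℝ (EuclideanSpace ℝ (Fin n))) *
        (ε * volume (ball (0 : EuclideanSpace ℝ (Fin n)) 1)) := mul_le_mul_right hk _
    _ = ε * (ENNReal.ofReal (ρ ^ Module.finrank ℝ (EuclideanSpace ℝ (Fin n))) *
        volume (ball (0 : EuclideanSpace ℝ (Fin n)) 1)) := by ring
    _ = ε * volume (ball x₀ ρ) := by rw [Measure.addHaar_ball volume x₀ hρ0.le]

/-- Blow-up convergence of phases: if a continuous `u` is approximated at `x₀` at first order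
by the two-plane function `P(x) = α(x·ν)⁺ − β(x·ν)⁻` (with `α, β > 0` and `ν` a unit vector),
then the relative Lebesgue measure, in balls `B(x₀, rN)`, of the symmetric differences between
the positivity (resp. negativity) sets of `u` and of the translate of `P` tends to `0` as
`r ↓ 0`, for every `N > 0`. -/
theorem phase_convergence_of_blowup {n : ℕ} (hn : 1 ≤ n)
    (ν : EuclideanSpace ℝ (Fin n)) (hν : ‖ν‖ = 1) (α β : ℝ) (hα : 0 < α) (hβ : 0 < β)
    (x₀ : EuclideanSpace ℝ (Fin n)) (u : EuclideanSpace ℝ (Fin n) → ℝ) (hu : Continuous u)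
    (P : EuclideanSpace ℝ (Fin n) → ℝ)
    (hP : P = fun x => α * max (inner ℝ x ν : ℝ) 0 - β * max (-(inner ℝ x ν : ℝ)) 0)
    (hlim : Tendsto (fun x => |u x - P (x - x₀)| / ‖x - x₀‖) (𝓝[≠] x₀) (𝓝 0)) :
    ∀ N : ℝ, 0 < N →
      Tendsto (fun r =>
          volume (symmDiff {x | 0 < u x} ((fun y => x₀ + y) '' {x | 0 < P x}) ∩ ball x₀ (r * N))
            / volume (ball x₀ (r * N))) (𝓝[>] (0:ℝ)) (𝓝 0) ∧
      Tendsto (fun r =>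
          volume (symmDiff {x | u x < 0} ((fun y => x₀ + y) '' {x | P x < 0}) ∩ ball x₀ (r * N))
            / volume (ball x₀ (r * N))) (𝓝[>] (0:ℝ)) (𝓝 0) := by
  intro N hN
  refine ⟨phase_aux ν hν α β hα hβ x₀ u hu P hP hlim N hN, ?_⟩
  have hP' : (fun x => -P x) =
      fun x => β * max ((inner ℝ x (-ν) : ℝ)) 0 - α * max (-(inner ℝ x (-ν) : ℝ)) 0 := by
    funext x
    rw [hP]
    simp only [inner_neg_right, neg_neg]
    ring
  have hlim' : Tendsto (fun x => |(-u x) - (-P (x - x₀))| / ‖x - x₀‖) (𝓝[≠] x₀) (𝓝 0) := by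
    have heq : (fun x => |(-u x) - (-P (x - x₀))| / ‖x - x₀‖)
        = fun x => |u x - P (x - x₀)| / ‖x - x₀‖ := by
      funext x
      rw [neg_sub_neg, abs_sub_comm]
    rw [heq]
    exact hlim
  have := phase_aux (-ν) (by simpa using hν) β α hβ hα x₀ (fun x => -u x) hu.neg
    (fun x => -P x) hP' hlim' N hN
  simpa only [neg_pos] using this
end
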